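/- arXiv:2012.04453 — 7 statements merged into one kernel-verified Lean document; each statement's English description precedes it below -/
import Mathlib

section
/- Let N ≥ 3 and T > 0, let ξ : [0,T] → ℝ^N be continuous, and let u₀ : ℝ^N → ℝ be continuous, positive and bounded. Let u(x,t) = ∫_{ℝ^N} G(x,y,t) u₀(y) dy + ∫₀^t G(x,ξ(s),t-s) ds. Fix s₀ ∈ (0,T] and assume σ(r) = O(r²) as r → 0, i.e., there exist A > 0 and R₀ > 0 with σ(r) ≤ A r² for all r ∈ (0,R₀). Then for every θ ∈ (0,1) there exist constants C > 0 and R > 0 such that ∫_{B^r(T)} u(x,T) dx ≥ C (σ(θr) + r^N) for all r ∈ (0,R). -/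
open MeasureTheory Set Real
open scoped ENNReal

lemma gauss_integrable {N : ℕ} {b : ℝ} (hb : 0 < b) :
    Integrable (fun x : EuclideanSpace ℝ (Fin N) => Real.exp (-b * ‖x‖ ^ 2)) := by
  have h := (GaussianFourier.integrable_cexp_neg_mul_sq_norm_add (V := EuclideanSpace ℝ (Fin N))
      (b := (b : ℂ)) (by simpa using hb) 0 0).re
  refine h.congr (Filter.Eventually.of_forall fun v => ?_)
  simp only [zero_mul, add_zero]
  rw [show (-(b:ℂ) * (‖v‖:ℂ) ^ 2) = ((-b * ‖v‖ ^ 2 : ℝ) : ℂ) by push_cast; ring]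
  exact Complex.exp_ofReal_re _

lemma gauss_key {N : ℕ} {t : ℝ} (ht : 0 < t) (c : EuclideanSpace ℝ (Fin N)) :
    ∀ v : EuclideanSpace ℝ (Fin N),
      -‖v - c‖ ^ 2 / (4 * t) = -(4 * t)⁻¹ * ‖v - c‖ ^ 2 := fun v => by field_simp

lemma gauss_integrable' {N : ℕ} {t : ℝ} (ht : 0 < t) (c : EuclideanSpace ℝ (Fin N)) :
    Integrable (fun x : EuclideanSpace ℝ (Fin N) =>
      (4 * Real.pi * t) ^ (-(N : ℝ) / 2) * Real.exp (-‖x - c‖ ^ 2 / (4 * t))) := by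
  have hb : 0 < (4 * t)⁻¹ := by positivity
  have h0 : Integrable (fun x : EuclideanSpace ℝ (Fin N) =>
      Real.exp (-(4 * t)⁻¹ * ‖x - c‖ ^ 2)) := (gauss_integrable hb).comp_sub_right c
  simp_rw [gauss_key ht c]
  exact h0.const_mul _

lemma gauss_integral' {N : ℕ} {t : ℝ} (ht : 0 < t) (c : EuclideanSpace ℝ (Fin N)) :
    ∫ x : EuclideanSpace ℝ (Fin N),
      (4 * Real.pi * t) ^ (-(N : ℝ) / 2) * Real.exp (-‖x - c‖ ^ 2 / (4 * t)) = 1 := by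
  have hb : 0 < (4 * t)⁻¹ := by positivity
  simp_rw [gauss_key ht c]
  rw [integral_const_mul]
  rw [integral_sub_right_eq_self
    (fun x : EuclideanSpace ℝ (Fin N) => Real.exp (-(4 * t)⁻¹ * ‖x‖ ^ 2)) c]
  rw [GaussianFourier.integral_rexp_neg_mul_sq_norm hb]
  rw [finrank_euclideanSpace_fin]
  have h2 : Real.pi / (4 * t)⁻¹ = 4 * Real.pi * t := by field_simp
  rw [h2, ← Real.rpow_add (by positivity), neg_div, neg_add_cancel, Real.rpow_zero]

lemma gauss_mass {N : ℕ} {t : ℝ} (ht : 0 < t) (c : EuclideanSpace ℝ (Fin N)) :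
    ∫⁻ x : EuclideanSpace ℝ (Fin N), ENNReal.ofReal
      ((4 * Real.pi * t) ^ (-(N : ℝ) / 2) * Real.exp (-‖x - c‖ ^ 2 / (4 * t))) = 1 := by
  rw [← ofReal_integral_eq_lintegral_ofReal (gauss_integrable' ht c)
    (Filter.Eventually.of_forall fun x => by positivity)]
  rw [gauss_integral' ht c, ENNReal.ofReal_one]

lemma gauss_ball_lower {N : ℕ} {t r θ A : ℝ} (ht : 0 < t) (hr : 0 < r)
    (hθ0 : 0 < θ) (hθ1 : θ < 1) (hA : 0 < A) (hle : t ≤ A * θ ^ 2 * r ^ 2)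
    (z c : EuclideanSpace ℝ (Fin N)) (hc : ‖c - z‖ ≤ θ * r) :
    ENNReal.ofReal (Real.exp (-(1:ℝ)/4) * (4 * Real.pi) ^ (-(N : ℝ) / 2) *
        (min ((1 - θ) / (Real.sqrt A * θ)) 1) ^ N) *
      volume (Metric.ball (0 : EuclideanSpace ℝ (Fin N)) 1)
    ≤ ∫⁻ x in Metric.closedBall z r, ENNReal.ofReal
        ((4 * Real.pi * t) ^ (-(N : ℝ) / 2) * Real.exp (-‖x - c‖ ^ 2 / (4 * t))) := by
  have hst : 0 < Real.sqrt t := Real.sqrt_pos.2 ht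
  set ρ : ℝ := min ((1 - θ) * r) (Real.sqrt t) with hρdef
  have hρ0 : 0 < ρ := lt_min (by nlinarith) hst
  -- inclusion of balls
  have hsub : Metric.closedBall c ρ ⊆ Metric.closedBall z r := by
    intro x hx
    rw [Metric.mem_closedBall, dist_eq_norm] at hx ⊢
    have : x - z = (x - c) + (c - z) := by abel
    rw [this]
    calc ‖(x - c) + (c - z)‖ ≤ ‖x - c‖ + ‖c - z‖ := norm_add_le _ _
      _ ≤ ρ + θ * r := add_le_add hx hc
      _ ≤ (1 - θ) * r + θ * r := add_le_add (min_le_left _ _) le_rfl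
      _ = r := by ring
  -- pointwise lower bound on the small ball
  have hpt : ∀ x ∈ Metric.closedBall c ρ,
      ENNReal.ofReal ((4 * Real.pi * t) ^ (-(N : ℝ) / 2) * Real.exp (-ρ ^ 2 / (4 * t)))
        ≤ ENNReal.ofReal ((4 * Real.pi * t) ^ (-(N : ℝ) / 2) *
            Real.exp (-‖x - c‖ ^ 2 / (4 * t))) := by
    intro x hx
    rw [Metric.mem_closedBall, dist_eq_norm] at hx
    apply ENNReal.ofReal_le_ofReal
    apply mul_le_mul_of_nonneg_left _ (by positivity)
    apply Real.exp_le_exp.2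
    rw [div_le_div_iff_of_pos_right (by positivity : (0:ℝ) < 4 * t)]
    nlinarith [norm_nonneg (x - c)]
  -- sqrt comparison
  have hA2 : Real.sqrt A ^ 2 = A := Real.sq_sqrt hA.le
  have hsqA : Real.sqrt t ≤ Real.sqrt A * θ * r := by
    have h1 : Real.sqrt t ≤ Real.sqrt (A * θ ^ 2 * r ^ 2) := Real.sqrt_le_sqrt hle
    have h2 : A * θ ^ 2 * r ^ 2 = (Real.sqrt A * θ * r) ^ 2 := by
      rw [mul_pow, mul_pow, hA2]
    rw [h2, Real.sqrt_sq (by positivity)] at h1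
    exact h1
  have hκ : min ((1 - θ) / (Real.sqrt A * θ)) 1 ≤ ρ / Real.sqrt t := by
    have e : ρ / Real.sqrt t
        = min ((1 - θ) * r / Real.sqrt t) (Real.sqrt t / Real.sqrt t) :=
      (min_div_div_right hst.le _ _).symm
    rw [e, div_self hst.ne']
    apply min_le_min _ le_rfl
    have e2 : (1 - θ) / (Real.sqrt A * θ) = (1 - θ) * r / (Real.sqrt A * θ * r) := by
      rw [mul_div_mul_right _ _ hr.ne']
    rw [e2]
    exact div_le_div_of_nonneg_left (by nlinarith) hst hsqA
  have hmain : (4 * Real.pi * t) ^ (-(N : ℝ) / 2) * ρ ^ N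
      = (4 * Real.pi) ^ (-(N : ℝ) / 2) * (ρ / Real.sqrt t) ^ N := by
    rw [Real.mul_rpow (by positivity) ht.le]
    have h1 : t ^ (-(N : ℝ) / 2) = ((Real.sqrt t) ^ N)⁻¹ := by
      rw [neg_div, Real.rpow_neg ht.le]
      congr 1
      rw [← Real.rpow_natCast (Real.sqrt t) N, Real.sqrt_eq_rpow, ← Real.rpow_mul ht.le]
      congr 1
      ring
    rw [h1, div_pow]
    field_simp
  have hρt : ρ ^ 2 ≤ t := by
    nlinarith [min_le_right ((1 - θ) * r) (Real.sqrt t), Real.sq_sqrt ht.le, hρ0]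
  have hexp : Real.exp (-(1:ℝ)/4) ≤ Real.exp (-ρ ^ 2 / (4 * t)) := by
    apply Real.exp_le_exp.2
    rw [neg_div, neg_div, neg_le_neg_iff]
    rw [div_le_div_iff₀ (by positivity) (by norm_num)]
    linarith
  have hmin0 : (0:ℝ) ≤ min ((1 - θ) / (Real.sqrt A * θ)) 1 :=
    le_min (div_nonneg (by linarith) (by positivity)) zero_le_one
  have hpow : (min ((1 - θ) / (Real.sqrt A * θ)) 1) ^ N ≤ (ρ / Real.sqrt t) ^ N :=
    pow_le_pow_left₀ hmin0 hκ N
  have hscalar : Real.exp (-(1:ℝ)/4) * (4 * Real.pi) ^ (-(N : ℝ) / 2) *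
      (min ((1 - θ) / (Real.sqrt A * θ)) 1) ^ N
      ≤ (4 * Real.pi * t) ^ (-(N : ℝ) / 2) * Real.exp (-ρ ^ 2 / (4 * t)) * ρ ^ N := by
    calc Real.exp (-(1:ℝ)/4) * (4 * Real.pi) ^ (-(N : ℝ) / 2) *
        (min ((1 - θ) / (Real.sqrt A * θ)) 1) ^ N
        = Real.exp (-(1:ℝ)/4) * ((4 * Real.pi) ^ (-(N : ℝ) / 2) *
            (min ((1 - θ) / (Real.sqrt A * θ)) 1) ^ N) := by ring
      _ ≤ Real.exp (-ρ ^ 2 / (4 * t)) * ((4 * Real.pi) ^ (-(N : ℝ) / 2) *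
            (ρ / Real.sqrt t) ^ N) := by
          apply mul_le_mul hexp (mul_le_mul_of_nonneg_left hpow (by positivity))
            (mul_nonneg (by positivity) (pow_nonneg hmin0 N)) (Real.exp_pos _).le
      _ = (4 * Real.pi * t) ^ (-(N : ℝ) / 2) * Real.exp (-ρ ^ 2 / (4 * t)) * ρ ^ N := by
          rw [← hmain]; ring
  calc ENNReal.ofReal (Real.exp (-(1:ℝ)/4) * (4 * Real.pi) ^ (-(N : ℝ) / 2) *
        (min ((1 - θ) / (Real.sqrt A * θ)) 1) ^ N) *
      volume (Metric.ball (0 : EuclideanSpace ℝ (Fin N)) 1)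
      ≤ ENNReal.ofReal ((4 * Real.pi * t) ^ (-(N : ℝ) / 2) *
          Real.exp (-ρ ^ 2 / (4 * t)) * ρ ^ N) *
        volume (Metric.ball (0 : EuclideanSpace ℝ (Fin N)) 1) :=
      mul_le_mul_left (ENNReal.ofReal_le_ofReal hscalar) _
    _ = ENNReal.ofReal ((4 * Real.pi * t) ^ (-(N : ℝ) / 2) * Real.exp (-ρ ^ 2 / (4 * t))) *
        (ENNReal.ofReal (ρ ^ N) * volume (Metric.ball (0 : EuclideanSpace ℝ (Fin N)) 1)) := by
      rw [ENNReal.ofReal_mul (by positivity), mul_assoc]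
    _ = ENNReal.ofReal ((4 * Real.pi * t) ^ (-(N : ℝ) / 2) * Real.exp (-ρ ^ 2 / (4 * t))) *
        volume (Metric.closedBall c ρ) := by
      rw [Measure.addHaar_closedBall volume c hρ0.le, finrank_euclideanSpace_fin]
    _ = ∫⁻ _x in Metric.closedBall c ρ, ENNReal.ofReal
          ((4 * Real.pi * t) ^ (-(N : ℝ) / 2) * Real.exp (-ρ ^ 2 / (4 * t))) :=
      (setLIntegral_const _ _).symm
    _ ≤ ∫⁻ x in Metric.closedBall c ρ, ENNReal.ofReal
          ((4 * Real.pi * t) ^ (-(N : ℝ) / 2) * Real.exp (-‖x - c‖ ^ 2 / (4 * t))) :=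
      setLIntegral_mono' Metric.isClosed_closedBall.measurableSet hpt
    _ ≤ ∫⁻ x in Metric.closedBall z r, ENNReal.ofReal
          ((4 * Real.pi * t) ^ (-(N : ℝ) / 2) * Real.exp (-‖x - c‖ ^ 2 / (4 * t))) :=
      lintegral_mono_set hsub

set_option maxHeartbeats 2000000 in
theorem stmt3 (N : ℕ) (hN : 3 ≤ N) (T : ℝ) (hT : 0 < T)
    (ξ : ℝ → EuclideanSpace ℝ (Fin N)) (hξ : ContinuousOn ξ (Icc 0 T))
    (u₀ : EuclideanSpace ℝ (Fin N) → ℝ) (hu₀c : Continuous u₀)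
    (hu₀pos : ∀ x, 0 < u₀ x) (hu₀bdd : ∃ M, ∀ x, u₀ x ≤ M)
    -- the heat kernel G
    (G : EuclideanSpace ℝ (Fin N) → EuclideanSpace ℝ (Fin N) → ℝ → ℝ)
    (hG : ∀ x y t, G x y t =
      (4 * Real.pi * t) ^ (-(N : ℝ) / 2) * Real.exp (-‖x - y‖ ^ 2 / (4 * t)))
    -- the solution u of u_t - Δu = δ(x - ξ(t)), u(·,0) = u₀
    (u : EuclideanSpace ℝ (Fin N) → ℝ → ℝ)
    (hu : ∀ x t, u x t = (∫ y, G x y t * u₀ y) + ∫ s in (0:ℝ)..t, G x (ξ s) (t - s))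
    (s₀ : ℝ) (hs₀ : s₀ ∈ Ioc 0 T)
    -- the first exit time σ (equal to s₀ when the set is empty)
    (σ : ℝ → ℝ)
    (hσ : ∀ r : ℝ, σ r = sInf (insert s₀ {s ∈ Icc 0 s₀ | r < ‖ξ (T - s) - ξ T‖}))
    -- σ(r) = O(r²) as r → 0
    (A R₀ : ℝ) (hA : 0 < A) (hR₀ : 0 < R₀)
    (hσO : ∀ r ∈ Ioo (0:ℝ) R₀, σ r ≤ A * r ^ 2)
    (θ : ℝ) (hθ : θ ∈ Ioo (0:ℝ) 1) :
    ∃ C > (0:ℝ), ∃ R > (0:ℝ), ∀ r ∈ Ioo (0:ℝ) R,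
      C * (σ (θ * r) + r ^ N) ≤ ∫ x in Metric.closedBall (ξ T) r, u x T := by
  obtain ⟨hθ0, hθ1⟩ := hθ
  obtain ⟨hs₀0, hs₀T⟩ := hs₀
  obtain ⟨M, hM⟩ := hu₀bdd
  -- continuous extension of ξ
  set ζ : ℝ → EuclideanSpace ℝ (Fin N) := fun s => ξ (max 0 (min s T)) with hζdef
  have hζc : Continuous ζ := by
    apply hξ.comp_continuous (continuous_const.max (continuous_id.min continuous_const))
    intro s; exact ⟨le_max_left _ _, max_le hT.le (min_le_right _ _)⟩
  have hζeq : ∀ s ∈ Icc (0:ℝ) T, ζ s = ξ s := by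
    intro s hs
    simp only [hζdef]
    rw [min_eq_left hs.2, max_eq_right hs.1]
  -- heat part and source part
  set H : EuclideanSpace ℝ (Fin N) → ℝ := fun x => ∫ y, G x y T * u₀ y with hHdef
  set f : EuclideanSpace ℝ (Fin N) → ℝ → ℝ := fun x s => G x (ζ s) (T - s) with hfdef
  set S : EuclideanSpace ℝ (Fin N) → ℝ := fun x => ∫ s in Ioo (0:ℝ) T, f x s with hSdef
  have huT : ∀ x, u x T = H x + S x := by
    intro x
    rw [hu x T, intervalIntegral.integral_of_le hT.le, integral_Ioc_eq_integral_Ioo]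
    congr 1
    apply setIntegral_congr_fun measurableSet_Ioo
    intro s hs
    simp only [hfdef]
    rw [hζeq s ⟨hs.1.le, hs.2.le⟩]
  have hGnn : ∀ (x y : EuclideanSpace ℝ (Fin N)) (t : ℝ), 0 ≤ t → 0 ≤ G x y t := by
    intro x y t ht
    rw [hG]
    exact mul_nonneg (Real.rpow_nonneg (by positivity) _) (Real.exp_pos _).le
  -- Gaussian facts in the y variable
  have hGy : ∀ x, Integrable (fun y => G x y T) := by
    intro x
    have key : (fun y : EuclideanSpace ℝ (Fin N) => G x y T)
        = fun y => (4 * Real.pi * T) ^ (-(N : ℝ) / 2) * Real.exp (-‖y - x‖ ^ 2 / (4 * T)) := by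
      funext y; rw [hG, norm_sub_rev]
    rw [key]; exact gauss_integrable' hT x
  have hGymass : ∀ x, ∫ y, G x y T = 1 := by
    intro x
    have key : (fun y : EuclideanSpace ℝ (Fin N) => G x y T)
        = fun y => (4 * Real.pi * T) ^ (-(N : ℝ) / 2) * Real.exp (-‖y - x‖ ^ 2 / (4 * T)) := by
      funext y; rw [hG, norm_sub_rev]
    rw [key]; exact gauss_integral' hT x
  -- measurability of H
  have hHsm : StronglyMeasurable H := by
    have hc : Continuous (fun p : EuclideanSpace ℝ (Fin N) × EuclideanSpace ℝ (Fin N) =>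
        G p.1 p.2 T * u₀ p.2) := by
      have e : (fun p : EuclideanSpace ℝ (Fin N) × EuclideanSpace ℝ (Fin N) =>
          G p.1 p.2 T * u₀ p.2)
          = fun p => (4 * Real.pi * T) ^ (-(N : ℝ) / 2) *
              Real.exp (-‖p.1 - p.2‖ ^ 2 / (4 * T)) * u₀ p.2 := by
        funext p; rw [hG]
      rw [e]
      apply Continuous.mul _ (hu₀c.comp continuous_snd)
      apply continuous_const.mul
      apply Real.continuous_exp.comp
      exact ((continuous_fst.sub continuous_snd).norm.pow 2).neg.div_const _
    exact hc.stronglyMeasurable.integral_prod_right'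
  have hprod : ∀ x, Integrable (fun y => G x y T * u₀ y) := by
    intro x
    have e : (fun y => G x y T * u₀ y) = fun y => u₀ y * G x y T := by funext y; ring
    rw [e]
    refine (hGy x).bdd_mul hu₀c.aestronglyMeasurable (c := M) (Filter.Eventually.of_forall fun y => ?_)
    rw [Real.norm_eq_abs, abs_of_pos (hu₀pos y)]
    exact hM y
  have hH0 : ∀ x, 0 ≤ H x := fun x =>
    integral_nonneg fun y => mul_nonneg (hGnn _ _ _ hT.le) (hu₀pos y).le
  have hHub : ∀ x, H x ≤ M := by
    intro x
    have h1 : H x ≤ ∫ y, G x y T * M := by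
      apply integral_mono (hprod x) ((hGy x).mul_const M)
      intro y
      exact mul_le_mul_of_nonneg_left (hM y) (hGnn _ _ _ hT.le)
    calc H x ≤ ∫ y, G x y T * M := h1
      _ = (∫ y, G x y T) * M := by rw [integral_mul_const]
      _ = M := by rw [hGymass x, one_mul]
  -- minimum of u₀ on the unit ball
  obtain ⟨z, hz, hzmin⟩ := (isCompact_closedBall (ξ T) 1).exists_isMinOn
    ⟨ξ T, Metric.mem_closedBall_self zero_le_one⟩ hu₀c.continuousOn
  set m : ℝ := u₀ z with hmdef
  have hm : 0 < m := hu₀pos z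
  set v₁ : ℝ := (volume (Metric.closedBall (ξ T) 1)).toReal with hv₁def
  have hv₁ : 0 < v₁ := ENNReal.toReal_pos
    (Metric.measure_closedBall_pos volume _ one_pos).ne' measure_closedBall_lt_top.ne
  set cT : ℝ := (4 * Real.pi * T) ^ (-(N : ℝ) / 2) with hcTdef
  have hcT : 0 < cT := Real.rpow_pos_of_pos (by positivity) _
  set h₁ : ℝ := cT * Real.exp (-1 / T) * m * v₁ with hh₁def
  have hh₁ : 0 < h₁ := by positivity
  have hH1 : ∀ x ∈ Metric.closedBall (ξ T) 1, h₁ ≤ H x := by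
    intro x hx
    have step1 : ∫ y in Metric.closedBall (ξ T) 1, G x y T * u₀ y ≤ H x :=
      setIntegral_le_integral (hprod x)
        (Filter.Eventually.of_forall fun y => mul_nonneg (hGnn _ _ _ hT.le) (hu₀pos y).le)
    have step2 : (cT * Real.exp (-1 / T) * m) * v₁
        ≤ ∫ y in Metric.closedBall (ξ T) 1, G x y T * u₀ y := by
      apply setIntegral_ge_of_const_le_real Metric.isClosed_closedBall.measurableSet
        measure_closedBall_lt_top.ne _ (hprod x).integrableOn
      intro y hy
      have hx' : dist x (ξ T) ≤ 1 := hx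
      have hy' : dist y (ξ T) ≤ 1 := hy
      have hxy : ‖x - y‖ ≤ 2 := by
        rw [← dist_eq_norm]
        calc dist x y ≤ dist x (ξ T) + dist (ξ T) y := dist_triangle _ _ _
          _ = dist x (ξ T) + dist y (ξ T) := by rw [dist_comm (ξ T) y]
          _ ≤ 2 := by linarith
      have hGlb : cT * Real.exp (-1 / T) ≤ G x y T := by
        rw [hG]
        apply mul_le_mul_of_nonneg_left _ hcT.le
        apply Real.exp_le_exp.2
        rw [neg_div, neg_div, neg_le_neg_iff, div_le_div_iff₀ (by positivity) hT]
        nlinarith [norm_nonneg (x - y), hT, hxy,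
          mul_nonneg (mul_nonneg (sub_nonneg.2 hxy)
            (by linarith [norm_nonneg (x - y)] : (0:ℝ) ≤ 2 + ‖x - y‖)) hT.le]
      exact mul_le_mul hGlb (hzmin hy) hm.le (hGnn _ _ _ hT.le)
    rw [hh₁def]
    linarith
  -- measurability of f
  have hfm : Measurable (fun p : EuclideanSpace ℝ (Fin N) × ℝ => f p.1 p.2) := by
    have e : (fun p : EuclideanSpace ℝ (Fin N) × ℝ => f p.1 p.2)
        = fun p => (4 * Real.pi * (T - p.2)) ^ (-(N : ℝ) / 2) *
            Real.exp (-‖p.1 - ζ p.2‖ ^ 2 / (4 * (T - p.2))) := by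
      funext p; simp only [hfdef]; rw [hG]
    rw [e]
    apply Measurable.mul
    · exact ((measurable_const.sub measurable_snd).const_mul (4 * Real.pi)).pow_const _
    · apply Real.continuous_exp.measurable.comp
      apply Measurable.div
      · exact ((continuous_fst.sub (hζc.comp continuous_snd)).norm.pow 2).neg.measurable
      · exact (measurable_const.sub measurable_snd).const_mul 4
  have hSsm : StronglyMeasurable S := hfm.stronglyMeasurable.integral_prod_right'
  have hfnn : ∀ x, ∀ s ∈ Ioo (0:ℝ) T, 0 ≤ f x s := by
    intro x s hs
    exact hGnn _ _ _ (by linarith [hs.2])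
  have hS0 : ∀ x, 0 ≤ S x := fun x => setIntegral_nonneg measurableSet_Ioo (hfnn x)
  -- constants
  set κ : ℝ := min ((1 - θ) / (Real.sqrt A * θ)) 1 with hκdef
  have hκ0 : 0 < κ := lt_min (div_pos (by linarith) (by positivity)) one_pos
  set c₂ : ℝ := Real.exp (-(1:ℝ)/4) * (4 * Real.pi) ^ (-(N : ℝ) / 2) * κ ^ N with hc₂def
  have hc₂ : 0 < c₂ :=
    mul_pos (mul_pos (Real.exp_pos _) (Real.rpow_pos_of_pos (by positivity) _)) (pow_pos hκ0 N)
  set V : ℝ≥0∞ := volume (Metric.ball (0 : EuclideanSpace ℝ (Fin N)) 1) with hVdef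
  have hVfin : V ≠ ⊤ := measure_ball_lt_top.ne
  set v : ℝ := V.toReal with hvdef
  have hv : 0 < v := ENNReal.toReal_pos (Metric.measure_ball_pos volume _ one_pos).ne' hVfin
  refine ⟨min h₁ c₂ * v, by positivity, min R₀ 1, lt_min hR₀ one_pos, ?_⟩
  intro r hr
  obtain ⟨hr0, hrR⟩ := hr
  have hrR₀ : r < R₀ := lt_of_lt_of_le hrR (min_le_left _ _)
  have hr1 : r < 1 := lt_of_lt_of_le hrR (min_le_right _ _)
  -- exit time facts
  set τ : ℝ := σ (θ * r) with hτdef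
  have hτeq : τ = sInf (insert s₀ {s ∈ Icc 0 s₀ | θ * r < ‖ξ (T - s) - ξ T‖}) := by
    rw [hτdef, hσ]
  have hbdd : BddBelow (insert s₀ {s ∈ Icc 0 s₀ | θ * r < ‖ξ (T - s) - ξ T‖}) := by
    refine ⟨0, ?_⟩
    rintro x (rfl | hx)
    · exact hs₀0.le
    · exact hx.1.1
  have hτ0 : 0 ≤ τ := by
    rw [hτeq]
    apply le_csInf ⟨s₀, mem_insert _ _⟩
    rintro b (rfl | hb)
    · exact hs₀0.le
    · exact hb.1.1
  have hτs₀ : τ ≤ s₀ := by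
    rw [hτeq]; exact csInf_le hbdd (mem_insert _ _)
  have hτA : τ ≤ A * θ ^ 2 * r ^ 2 := by
    have h1 : θ * r < R₀ := by nlinarith
    have := hσO (θ * r) ⟨by positivity, h1⟩
    calc τ ≤ A * (θ * r) ^ 2 := this
      _ = A * θ ^ 2 * r ^ 2 := by ring
  have hexit : ∀ t : ℝ, 0 ≤ t → t < τ → ‖ξ (T - t) - ξ T‖ ≤ θ * r := by
    intro t ht0 htτ
    by_contra hcon
    push_neg at hcon
    have htmem : t ∈ {s ∈ Icc 0 s₀ | θ * r < ‖ξ (T - s) - ξ T‖} :=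
      ⟨⟨ht0, le_trans htτ.le hτs₀⟩, hcon⟩
    have : τ ≤ t := by
      rw [hτeq]; exact csInf_le hbdd (mem_insert_of_mem _ htmem)
    linarith
  set Br := Metric.closedBall (ξ T) r with hBrdef
  -- lintegral machinery
  set F : EuclideanSpace ℝ (Fin N) → ℝ≥0∞ :=
    fun x => ∫⁻ s in Ioo (0:ℝ) T, ENNReal.ofReal (f x s) with hFdef
  have hofm : Measurable (fun p : EuclideanSpace ℝ (Fin N) × ℝ => ENNReal.ofReal (f p.1 p.2)) :=
    hfm.ennreal_ofReal
  have hFmeas : Measurable F := hofm.lintegral_prod_right'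
  have hmass : ∀ s ∈ Ioo (0:ℝ) T, (∫⁻ x, ENNReal.ofReal (f x s)) = 1 := by
    intro s hs
    have ht' : 0 < T - s := by linarith [hs.2]
    have e : (fun x => ENNReal.ofReal (f x s)) = fun x => ENNReal.ofReal
        ((4 * Real.pi * (T - s)) ^ (-(N : ℝ) / 2) * Real.exp (-‖x - ζ s‖ ^ 2 / (4 * (T - s)))) := by
      funext x; simp only [hfdef]; rw [hG]
    rw [e]; exact gauss_mass ht' (ζ s)
  have hswap : ∀ J : Set ℝ,
      (∫⁻ x in Br, ∫⁻ s in J, ENNReal.ofReal (f x s))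
        = ∫⁻ s in J, ∫⁻ x in Br, ENNReal.ofReal (f x s) :=
    fun J => lintegral_lintegral_swap hofm.aemeasurable
  have hupper : (∫⁻ x in Br, F x) ≤ ENNReal.ofReal T := by
    calc (∫⁻ x in Br, F x) = ∫⁻ s in Ioo (0:ℝ) T, ∫⁻ x in Br, ENNReal.ofReal (f x s) :=
        hswap (Ioo 0 T)
      _ ≤ ∫⁻ _s in Ioo (0:ℝ) T, 1 := by
        apply setLIntegral_mono' measurableSet_Ioo
        intro s hs
        exact le_trans (setLIntegral_le_lintegral _ _) (le_of_eq (hmass s hs))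
      _ = ENNReal.ofReal T := by
        rw [setLIntegral_one, Real.volume_Ioo, sub_zero]
  have hFfin : ∀ᵐ x ∂(volume.restrict Br), F x < ⊤ :=
    ae_lt_top hFmeas (lt_of_le_of_lt hupper ENNReal.ofReal_lt_top).ne
  have hSF : ∀ᵐ x ∂(volume.restrict Br), ENNReal.ofReal (S x) = F x := by
    filter_upwards [hFfin] with x hx
    have hxm : Measurable (f x) := hfm.comp measurable_prodMk_left
    have hnn : 0 ≤ᵐ[volume.restrict (Ioo (0:ℝ) T)] f x :=
      (ae_restrict_iff' measurableSet_Ioo).2 (Filter.Eventually.of_forall (hfnn x))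
    have hint : IntegrableOn (f x) (Ioo 0 T) := by
      constructor
      · exact hxm.stronglyMeasurable.aestronglyMeasurable
      · rw [hasFiniteIntegral_iff_ofReal hnn]
        exact hx
    have e : S x = (F x).toReal := by
      simp only [hSdef, hFdef]
      exact integral_eq_lintegral_of_nonneg_ae hnn hxm.stronglyMeasurable.aestronglyMeasurable
    rw [e, ENNReal.ofReal_toReal hx.ne]
  have hIooSub : Ioo (T - τ) T ⊆ Ioo (0:ℝ) T := by
    intro s hs
    exact ⟨by linarith [hs.1, hτs₀, hs₀T], hs.2⟩
  have hlowS : ENNReal.ofReal c₂ * V * ENNReal.ofReal τ ≤ ∫⁻ x in Br, F x := by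
    calc ENNReal.ofReal c₂ * V * ENNReal.ofReal τ
        = ∫⁻ _s in Ioo (T - τ) T, ENNReal.ofReal c₂ * V := by
          rw [setLIntegral_const, Real.volume_Ioo, sub_sub_cancel]
      _ ≤ ∫⁻ s in Ioo (T - τ) T, ∫⁻ x in Br, ENNReal.ofReal (f x s) := by
          apply setLIntegral_mono' measurableSet_Ioo
          intro s hs
          have ht0 : 0 < T - s := by linarith [hs.2]
          have htτ : T - s < τ := by linarith [hs.1]
          have hsIcc : s ∈ Icc (0:ℝ) T := ⟨(hIooSub hs).1.le, hs.2.le⟩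
          have hcnorm : ‖ζ s - ξ T‖ ≤ θ * r := by
            have h := hexit (T - s) ht0.le htτ
            rwa [show T - (T - s) = s by ring, ← hζeq s hsIcc] at h
          have hball := gauss_ball_lower (N := N) ht0 hr0 hθ0 hθ1 hA
            (le_trans htτ.le hτA) (ξ T) (ζ s) hcnorm
          have e : (fun x => ENNReal.ofReal (f x s)) = fun x => ENNReal.ofReal
              ((4 * Real.pi * (T - s)) ^ (-(N : ℝ) / 2) *
                Real.exp (-‖x - ζ s‖ ^ 2 / (4 * (T - s)))) := by
            funext x; simp only [hfdef]; rw [hG]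
          rw [e]
          exact hball
      _ = ∫⁻ x in Br, ∫⁻ s in Ioo (T - τ) T, ENNReal.ofReal (f x s) := (hswap _).symm
      _ ≤ ∫⁻ x in Br, F x := lintegral_mono fun x => lintegral_mono_set hIooSub
  have hBr1 : Br ⊆ Metric.closedBall (ξ T) 1 := Metric.closedBall_subset_closedBall hr1.le
  have hlowH : ENNReal.ofReal h₁ * (ENNReal.ofReal (r ^ N) * V)
      ≤ ∫⁻ x in Br, ENNReal.ofReal (H x) := by
    calc ENNReal.ofReal h₁ * (ENNReal.ofReal (r ^ N) * V)
        = ENNReal.ofReal h₁ * volume Br := by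
          rw [hBrdef, Measure.addHaar_closedBall volume _ hr0.le, finrank_euclideanSpace_fin]
      _ = ∫⁻ _x in Br, ENNReal.ofReal h₁ := (setLIntegral_const _ _).symm
      _ ≤ ∫⁻ x in Br, ENNReal.ofReal (H x) :=
          setLIntegral_mono' Metric.isClosed_closedBall.measurableSet
            fun x hx => ENNReal.ofReal_le_ofReal (hH1 x (hBr1 hx))
  have hsplit : (∫⁻ x in Br, ENNReal.ofReal (u x T))
      = (∫⁻ x in Br, ENNReal.ofReal (H x)) + ∫⁻ x in Br, ENNReal.ofReal (S x) := by
    calc (∫⁻ x in Br, ENNReal.ofReal (u x T))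
        = ∫⁻ x in Br, (ENNReal.ofReal (H x) + ENNReal.ofReal (S x)) := by
          apply lintegral_congr
          intro x
          rw [huT x, ENNReal.ofReal_add (hH0 x) (hS0 x)]
      _ = _ := lintegral_add_left (hHsm.measurable.ennreal_ofReal) _
  have hSpart : (∫⁻ x in Br, ENNReal.ofReal (S x)) = ∫⁻ x in Br, F x :=
    lintegral_congr_ae hSF
  have hufin : (∫⁻ x in Br, ENNReal.ofReal (u x T)) ≠ ⊤ := by
    rw [hsplit, hSpart]
    have h1 : (∫⁻ x in Br, ENNReal.ofReal (H x)) ≤ ENNReal.ofReal M * volume Br := by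
      calc (∫⁻ x in Br, ENNReal.ofReal (H x)) ≤ ∫⁻ _x in Br, ENNReal.ofReal M :=
          setLIntegral_mono' Metric.isClosed_closedBall.measurableSet
            fun x _ => ENNReal.ofReal_le_ofReal (hHub x)
        _ = ENNReal.ofReal M * volume Br := setLIntegral_const _ _
    apply ENNReal.add_ne_top.2
    constructor
    · exact (lt_of_le_of_lt h1 (ENNReal.mul_lt_top ENNReal.ofReal_lt_top
        measure_closedBall_lt_top)).ne
    · exact (lt_of_le_of_lt hupper ENNReal.ofReal_lt_top).ne
  have hlow : ENNReal.ofReal (min h₁ c₂ * v * (τ + r ^ N))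
      ≤ ∫⁻ x in Br, ENNReal.ofReal (u x T) := by
    rw [hsplit, hSpart]
    have hVv : V = ENNReal.ofReal v := (ENNReal.ofReal_toReal hVfin).symm
    have e1 : ENNReal.ofReal h₁ * (ENNReal.ofReal (r ^ N) * V)
        = ENNReal.ofReal (h₁ * (r ^ N * v)) := by
      rw [hVv, ← ENNReal.ofReal_mul (by positivity), ← ENNReal.ofReal_mul hh₁.le]
    have e2 : ENNReal.ofReal c₂ * V * ENNReal.ofReal τ
        = ENNReal.ofReal (c₂ * v * τ) := by
      rw [hVv, ← ENNReal.ofReal_mul hc₂.le, ← ENNReal.ofReal_mul (by positivity)]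
    calc ENNReal.ofReal (min h₁ c₂ * v * (τ + r ^ N))
        ≤ ENNReal.ofReal (h₁ * (r ^ N * v) + c₂ * v * τ) := by
          apply ENNReal.ofReal_le_ofReal
          have l1 : min h₁ c₂ ≤ h₁ := min_le_left _ _
          have l2 : min h₁ c₂ ≤ c₂ := min_le_right _ _
          have l3 : (0:ℝ) ≤ r ^ N := pow_nonneg hr0.le N
          have l4 : (0:ℝ) ≤ min h₁ c₂ := le_min hh₁.le hc₂.le
          have k1 : min h₁ c₂ * v * τ ≤ c₂ * v * τ :=
            mul_le_mul_of_nonneg_right (mul_le_mul_of_nonneg_right l2 hv.le) hτ0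
          have k2 : min h₁ c₂ * v * r ^ N ≤ h₁ * v * r ^ N :=
            mul_le_mul_of_nonneg_right (mul_le_mul_of_nonneg_right l1 hv.le) l3
          nlinarith [k1, k2]
      _ = ENNReal.ofReal (h₁ * (r ^ N * v)) + ENNReal.ofReal (c₂ * v * τ) :=
          ENNReal.ofReal_add (by positivity) (by positivity)
      _ ≤ _ := by
          refine add_le_add ?_ ?_
          · rw [← e1]; exact hlowH
          · rw [← e2]; exact hlowS
  have hueq : (∫ x in Br, u x T) = (∫⁻ x in Br, ENNReal.ofReal (u x T)).toReal := by
    apply integral_eq_lintegral_of_nonneg_ae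
    · refine Filter.Eventually.of_forall fun x => ?_
      simp only [Pi.zero_apply]
      rw [huT x]
      exact add_nonneg (hH0 x) (hS0 x)
    · have e : (fun x => u x T) = fun x => H x + S x := funext huT
      rw [e]
      exact (hHsm.add hSsm).aestronglyMeasurable
  rw [hueq]
  have hfinal := ENNReal.toReal_mono hufin hlow
  rwa [ENNReal.toReal_ofReal (by positivity)] at hfinal
end

section
/- Let N ≥ 3 and T > 0, and let ξ : [0,T] → ℝ^N be continuous. Define F(x) = ∫₀^T (4π(T-t))^{-N/2} exp(-|x - ξ(t)|²/(4(T-t))) dt. Then there exists a constant C > 0, depending only on N, such that ∫_{B^r(T)} F(x) dx ≤ C r² for all r > 0. -/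
open MeasureTheory Set

lemma gauss_lintegral_one (N : ℕ) {s : ℝ} (hs : 0 < s) (c : EuclideanSpace ℝ (Fin N)) :
    ∫⁻ x : EuclideanSpace ℝ (Fin N),
      ENNReal.ofReal ((4 * Real.pi * s) ^ (-(N:ℝ)/2) * Real.exp (-‖x - c‖^2 / (4*s))) = 1 := by
  have hb : (0:ℝ) < (4*s)⁻¹ := by positivity
  have hexp : ∀ x : EuclideanSpace ℝ (Fin N),
      Real.exp (-‖x - c‖^2 / (4*s)) = Real.exp (-(4*s)⁻¹ * ‖x - c‖^2) := by
    intro x; congr 1; field_simp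
  have h1 : Integrable (fun v : EuclideanSpace ℝ (Fin N) ↦
      Complex.exp (-(((4*s)⁻¹:ℝ):ℂ) * (‖v‖:ℂ)^2)) := by
    simpa using GaussianFourier.integrable_cexp_neg_mul_sq_norm_add
      (show (0:ℝ) < (((4*s)⁻¹ : ℝ):ℂ).re from hb) 0 (0 : EuclideanSpace ℝ (Fin N))
  have hint : Integrable (fun v : EuclideanSpace ℝ (Fin N) ↦ Real.exp (-(4*s)⁻¹ * ‖v‖^2)) := by
    refine h1.norm.congr (ae_of_all _ fun v ↦ ?_)
    simp only []
    rw [Complex.norm_exp]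
    congr 1
    have : (-(((4*s)⁻¹:ℝ):ℂ)) * (‖v‖:ℂ)^2 = ((-(4*s)⁻¹ * ‖v‖^2 : ℝ) : ℂ) := by push_cast; ring
    rw [this, Complex.ofReal_re]
  have hint2 : Integrable (fun x : EuclideanSpace ℝ (Fin N) ↦ Real.exp (-(4*s)⁻¹ * ‖x - c‖^2)) :=
    hint.comp_sub_right c
  have hint3 : Integrable (fun x : EuclideanSpace ℝ (Fin N) ↦
      (4 * Real.pi * s) ^ (-(N:ℝ)/2) * Real.exp (-‖x - c‖^2 / (4*s))) := by
    simp_rw [hexp]; exact hint2.const_mul _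
  rw [← ofReal_integral_eq_lintegral_ofReal hint3 (ae_of_all _ fun x ↦ by positivity)]
  have hval : ∫ x : EuclideanSpace ℝ (Fin N),
      (4 * Real.pi * s) ^ (-(N:ℝ)/2) * Real.exp (-‖x - c‖^2 / (4*s))
      = (4 * Real.pi * s) ^ (-(N:ℝ)/2) * (4 * Real.pi * s) ^ ((N:ℝ)/2) := by
    simp_rw [hexp]
    rw [MeasureTheory.integral_const_mul]
    congr 1
    rw [integral_sub_right_eq_self
      (fun v : EuclideanSpace ℝ (Fin N) ↦ Real.exp (-(4*s)⁻¹ * ‖v‖^2)) c]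
    rw [GaussianFourier.integral_rexp_neg_mul_sq_norm hb, finrank_euclideanSpace_fin]
    congr 1
    rw [div_eq_mul_inv, inv_inv]
    ring
  rw [hval, ← Real.rpow_add (by positivity), neg_div, neg_add_cancel, Real.rpow_zero,
    ENNReal.ofReal_one]

set_option maxHeartbeats 1000000 in
theorem stmt5 (N : ℕ) (hN : 3 ≤ N) :
    -- the constant C depends only on N
    ∃ C > (0:ℝ), ∀ T : ℝ, 0 < T →
      ∀ ξ : ℝ → EuclideanSpace ℝ (Fin N), ContinuousOn ξ (Icc 0 T) →
        ∀ F : EuclideanSpace ℝ (Fin N) → ℝ,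
          (∀ x, F x = ∫ t in (0:ℝ)..T,
            (4 * Real.pi * (T - t)) ^ (-(N : ℝ) / 2) *
              Real.exp (-‖x - ξ t‖ ^ 2 / (4 * (T - t)))) →
          ∀ r > (0:ℝ), ∫ x in Metric.closedBall (ξ T) r, F x ≤ C * r ^ 2 := by
  classical
  set κ : ENNReal := volume (Metric.ball (0 : EuclideanSpace ℝ (Fin N)) 1) with hκdef
  have hκfin : κ ≠ ⊤ := measure_ball_lt_top.ne
  have hκnn : (0:ℝ) ≤ κ.toReal := ENNReal.toReal_nonneg
  set c1 : ℝ := (4 * Real.pi) ^ (-(N:ℝ)/2) with hc1def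
  have hc1pos : 0 < c1 := Real.rpow_pos_of_pos (by positivity) _
  have hNR : (3:ℝ) ≤ (N:ℝ) := by exact_mod_cast hN
  refine ⟨1 + 2 * c1 * κ.toReal, by nlinarith, ?_⟩
  intro T hT ξ hξ F hF r hr
  set B : Set (EuclideanSpace ℝ (Fin N)) := Metric.closedBall (ξ T) r with hBdef
  set g : ℝ → EuclideanSpace ℝ (Fin N) → ℝ := fun t x ↦
    (4 * Real.pi * (T - t)) ^ (-(N:ℝ)/2) * Real.exp (-‖x - ξ t‖^2 / (4*(T - t))) with hgdef
  have hF' : ∀ x, F x = ∫ t in (0:ℝ)..T, g t x := hF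
  have hgnn : ∀ t x, t ≤ T → 0 ≤ g t x := fun t x ht ↦
    mul_nonneg (Real.rpow_nonneg (by have := Real.pi_pos; nlinarith [sub_nonneg.2 ht]) _)
      (Real.exp_pos _).le
  have hFnn : ∀ x, 0 ≤ F x := by
    intro x
    rw [hF' x]
    exact intervalIntegral.integral_nonneg hT.le fun u hu ↦ hgnn u x hu.2
  -- the constant and target
  have hCr2 : (0:ℝ) ≤ (1 + 2 * c1 * κ.toReal) * r ^ 2 :=
    mul_nonneg (by nlinarith) (sq_nonneg r)
  have hrpowm : Measurable fun y : ℝ ↦ y ^ (-(N:ℝ)/2) := by measurability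
  rw [← ENNReal.ofReal_le_ofReal_iff hCr2]
  -- Step 1
  have step1 : ENNReal.ofReal (∫ x in B, F x) ≤ ∫⁻ x in B, ENNReal.ofReal (F x) := by
    by_cases hi : IntegrableOn F B
    · exact le_of_eq (ofReal_integral_eq_lintegral_ofReal hi (ae_of_all _ hFnn))
    · rw [integral_undef hi]; simp
  -- Step 2
  have step2 : ∫⁻ x in B, ENNReal.ofReal (F x)
      ≤ ∫⁻ x in B, ∫⁻ t in Ioc (0:ℝ) T, ENNReal.ofReal (g t x) := by
    refine lintegral_mono fun x ↦ ?_
    rw [hF' x, intervalIntegral.integral_of_le hT.le]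
    by_cases hi : IntegrableOn (fun t ↦ g t x) (Ioc 0 T)
    · refine le_of_eq (ofReal_integral_eq_lintegral_ofReal hi ?_)
      exact (ae_restrict_iff' measurableSet_Ioc).2 (ae_of_all _ fun t ht ↦ hgnn t x ht.2)
    · rw [integral_undef hi]; simp
  -- Step 3 : Tonelli swap
  have hmeas : AEMeasurable (fun p : (EuclideanSpace ℝ (Fin N)) × ℝ ↦ ENNReal.ofReal (g p.2 p.1))
      ((volume.restrict B).prod (volume.restrict (Ioc (0:ℝ) T))) := by
    have hξm : AEMeasurable ξ (volume.restrict (Ioc (0:ℝ) T)) :=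
      (hξ.mono Ioc_subset_Icc_self).aemeasurable measurableSet_Ioc
    have hξm2 : AEMeasurable (fun p : (EuclideanSpace ℝ (Fin N)) × ℝ ↦ ξ p.2)
        ((volume.restrict B).prod (volume.restrict (Ioc (0:ℝ) T))) :=
      hξm.comp_quasiMeasurePreserving Measure.quasiMeasurePreserving_snd
    apply ENNReal.measurable_ofReal.comp_aemeasurable
    apply AEMeasurable.mul
    · exact (hrpowm.comp ((measurable_snd.const_sub T).const_mul (4 * Real.pi))).aemeasurable
    · apply (Real.measurable_exp.comp_aemeasurable)
      apply AEMeasurable.div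
      · exact ((((measurable_fst.aemeasurable.sub hξm2).norm).pow aemeasurable_const).neg)
      · have hden : Measurable fun p : (EuclideanSpace ℝ (Fin N)) × ℝ ↦ 4 * (T - p.2) := by
          apply Measurable.const_mul
          exact measurable_const.sub measurable_snd
        exact hden.aemeasurable
  have step3 : ∫⁻ x in B, ∫⁻ t in Ioc (0:ℝ) T, ENNReal.ofReal (g t x)
      = ∫⁻ t in Ioc (0:ℝ) T, ∫⁻ x in B, ENNReal.ofReal (g t x) :=
    lintegral_lintegral_swap hmeas
  -- bound with total mass 1
  have hA : ∀ t ∈ Ioo (0:ℝ) T, ∫⁻ x in B, ENNReal.ofReal (g t x) ≤ 1 := by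
    intro t ht
    refine le_trans (setLIntegral_le_lintegral _ _) (le_of_eq ?_)
    exact gauss_lintegral_one N (sub_pos.2 ht.2) (ξ t)
  refine le_trans step1 (le_trans step2 ?_)
  rw [step3,
    show volume.restrict (Ioc (0:ℝ) T) = volume.restrict (Ioo (0:ℝ) T) from
      (Measure.restrict_congr_set Ioo_ae_eq_Ioc).symm]
  by_cases hrT : T ≤ r ^ 2
  · -- small T case
    calc ∫⁻ t in Ioo (0:ℝ) T, ∫⁻ x in B, ENNReal.ofReal (g t x)
        ≤ ∫⁻ _ in Ioo (0:ℝ) T, 1 := setLIntegral_mono measurable_const hA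
      _ = ENNReal.ofReal T := by rw [setLIntegral_one, Real.volume_Ioo, sub_zero]
      _ ≤ ENNReal.ofReal ((1 + 2 * c1 * κ.toReal) * r ^ 2) := by
          apply ENNReal.ofReal_le_ofReal
          nlinarith [mul_nonneg (mul_nonneg (mul_nonneg (by norm_num : (0:ℝ) ≤ 2) hc1pos.le)
            hκnn) (sq_nonneg r)]
  · push_neg at hrT
    set a : ℝ := T - r ^ 2 with hadef
    have ha0 : 0 < a := by simp [hadef]; linarith
    have haT : a ≤ T := by nlinarith
    -- split
    have haT' : a < T := by rw [hadef]; nlinarith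
    rw [show Ioo (0:ℝ) T = Ioc 0 a ∪ Ioo a T from
      (Ioc_union_Ioo_eq_Ioo ha0.le haT').symm,
      lintegral_union measurableSet_Ioo
        (Set.disjoint_left.2 fun t h1 h2 ↦ absurd h1.2 (not_le.2 h2.1))]
    have hnear : ∫⁻ t in Ioo a T, ∫⁻ x in B, ENNReal.ofReal (g t x) ≤ ENNReal.ofReal (r ^ 2) := by
      calc ∫⁻ t in Ioo a T, ∫⁻ x in B, ENNReal.ofReal (g t x)
          ≤ ∫⁻ _ in Ioo a T, 1 :=
            setLIntegral_mono measurable_const fun t ht ↦ hA t ⟨lt_of_le_of_lt ha0.le ht.1, ht.2⟩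
        _ = ENNReal.ofReal (T - a) := by rw [setLIntegral_one, Real.volume_Ioo]
        _ = ENNReal.ofReal (r ^ 2) := by congr 1; rw [hadef]; ring
    -- far part
    have hvolB : volume B = ENNReal.ofReal (r ^ N) * κ := by
      rw [hBdef, Measure.addHaar_closedBall volume _ hr.le, finrank_euclideanSpace_fin, hκdef]
    have hBbd : ∀ t ∈ Ioc (0:ℝ) a, ∫⁻ x in B, ENNReal.ofReal (g t x)
        ≤ ENNReal.ofReal (c1 * (T - t) ^ (-(N:ℝ)/2)) * (ENNReal.ofReal (r ^ N) * κ) := by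
      intro t ht
      have htT : 0 < T - t := by have := ht.2; nlinarith
      have hpt : ∀ x, g t x ≤ c1 * (T - t) ^ (-(N:ℝ)/2) := by
        intro x
        have hexple : Real.exp (-‖x - ξ t‖^2 / (4*(T - t))) ≤ 1 := by
          rw [Real.exp_le_one_iff]
          rw [neg_div]
          simp only [neg_nonpos]
          positivity
        have hbase : (4 * Real.pi * (T - t)) ^ (-(N:ℝ)/2) = c1 * (T - t) ^ (-(N:ℝ)/2) := by
          rw [hc1def, ← Real.mul_rpow (by positivity) htT.le]
        calc g t x ≤ (4 * Real.pi * (T - t)) ^ (-(N:ℝ)/2) * 1 := by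
              exact mul_le_mul_of_nonneg_left hexple (Real.rpow_nonneg (by positivity) _)
          _ = c1 * (T - t) ^ (-(N:ℝ)/2) := by rw [mul_one, hbase]
      calc ∫⁻ x in B, ENNReal.ofReal (g t x)
          ≤ ∫⁻ _ in B, ENNReal.ofReal (c1 * (T - t) ^ (-(N:ℝ)/2)) :=
            lintegral_mono fun x ↦ ENNReal.ofReal_le_ofReal (hpt x)
        _ = ENNReal.ofReal (c1 * (T - t) ^ (-(N:ℝ)/2)) * volume B := setLIntegral_const _ _
        _ = _ := by rw [hvolB]
    have hVne : ENNReal.ofReal (r ^ N) * κ ≠ ⊤ := ENNReal.mul_ne_top ENNReal.ofReal_ne_top hκfin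
    have hfarint : ∫⁻ t in Ioc (0:ℝ) a, ENNReal.ofReal (c1 * (T - t) ^ (-(N:ℝ)/2))
        ≤ ENNReal.ofReal (2 * c1 * r ^ ((2:ℝ) - N)) := by
      have hcont : ContinuousOn (fun t ↦ c1 * (T - t) ^ (-(N:ℝ)/2)) (Icc 0 a) := by
        refine continuousOn_const.mul ?_
        apply ContinuousOn.rpow_const ((continuous_const.sub continuous_id').continuousOn)
        intro t ht
        left
        have : r ^ 2 ≤ T - t := by simp at ht; rcases ht with ⟨h1, h2⟩; rw [hadef] at h2; linarith
        exact ne_of_gt (by show (0:ℝ) < T - t; nlinarith)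
      have hInt : IntegrableOn (fun t ↦ c1 * (T - t) ^ (-(N:ℝ)/2)) (Ioc 0 a) :=
        (hcont.integrableOn_Icc).mono_set Ioc_subset_Icc_self
      rw [← ofReal_integral_eq_lintegral_ofReal hInt ((ae_restrict_iff' measurableSet_Ioc).2
        (ae_of_all _ fun t ht ↦ by
          have : (0:ℝ) < T - t := by have := ht.2; nlinarith
          positivity))]
      apply ENNReal.ofReal_le_ofReal
      have heq1 : ∫ t in Ioc (0:ℝ) a, c1 * (T - t) ^ (-(N:ℝ)/2)
          = c1 * ∫ t in (0:ℝ)..a, (T - t) ^ (-(N:ℝ)/2) := by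
        rw [← intervalIntegral.integral_of_le ha0.le, intervalIntegral.integral_const_mul]
      rw [heq1]
      have heq2 : ∫ t in (0:ℝ)..a, (T - t) ^ (-(N:ℝ)/2)
          = ∫ s in (T - a)..(T - 0), s ^ (-(N:ℝ)/2) :=
        intervalIntegral.integral_comp_sub_left (fun s ↦ s ^ (-(N:ℝ)/2)) T
      rw [heq2, sub_zero, show T - a = r ^ 2 by rw [hadef]; ring]
      have hne1 : -(N:ℝ)/2 ≠ -1 := by intro h; linarith
      have h0mem : (0:ℝ) ∉ Set.uIcc (r ^ 2) T := by
        intro h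
        rw [Set.mem_uIcc] at h
        rcases h with ⟨h1, _⟩ | ⟨h1, _⟩ <;> nlinarith
      rw [integral_rpow (Or.inr ⟨hne1, h0mem⟩)]
      have hru : (r ^ 2 : ℝ) ^ (-(N:ℝ)/2 + 1) = r ^ ((2:ℝ) - N) := by
        rw [← Real.rpow_natCast r 2, ← Real.rpow_mul hr.le]
        congr 1
        push_cast
        ring
      have hTpow : 0 ≤ T ^ (-(N:ℝ)/2 + 1) := Real.rpow_nonneg hT.le _
      have hupow : 0 ≤ (r ^ 2 : ℝ) ^ (-(N:ℝ)/2 + 1) := Real.rpow_nonneg (by positivity) _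
      have hcneg : -(N:ℝ)/2 + 1 ≤ -(1/2) := by linarith [hNR]
      have hkey : (T ^ (-(N:ℝ)/2 + 1) - (r ^ 2 : ℝ) ^ (-(N:ℝ)/2 + 1)) / (-(N:ℝ)/2 + 1)
          ≤ 2 * ((r ^ 2 : ℝ) ^ (-(N:ℝ)/2 + 1)) := by
        rw [div_le_iff_of_neg (by linarith)]
        nlinarith
      calc c1 * ((T ^ (-(N:ℝ)/2 + 1) - (r ^ 2 : ℝ) ^ (-(N:ℝ)/2 + 1)) / (-(N:ℝ)/2 + 1))
          ≤ c1 * (2 * ((r ^ 2 : ℝ) ^ (-(N:ℝ)/2 + 1))) :=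
            mul_le_mul_of_nonneg_left hkey hc1pos.le
        _ = 2 * c1 * r ^ ((2:ℝ) - N) := by rw [hru]; ring
    have hfar : ∫⁻ t in Ioc (0:ℝ) a, ∫⁻ x in B, ENNReal.ofReal (g t x)
        ≤ ENNReal.ofReal (2 * c1 * κ.toReal * r ^ 2) := by
      calc ∫⁻ t in Ioc (0:ℝ) a, ∫⁻ x in B, ENNReal.ofReal (g t x)
          ≤ ∫⁻ t in Ioc (0:ℝ) a, ENNReal.ofReal (c1 * (T - t) ^ (-(N:ℝ)/2))
              * (ENNReal.ofReal (r ^ N) * κ) := by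
            refine setLIntegral_mono ?_ hBbd
            apply Measurable.mul_const
            exact ENNReal.measurable_ofReal.comp
              ((hrpowm.comp (measurable_const.sub measurable_id)).const_mul c1)
        _ = (∫⁻ t in Ioc (0:ℝ) a, ENNReal.ofReal (c1 * (T - t) ^ (-(N:ℝ)/2)))
              * (ENNReal.ofReal (r ^ N) * κ) := lintegral_mul_const' _ _ hVne
        _ ≤ ENNReal.ofReal (2 * c1 * r ^ ((2:ℝ) - N)) * (ENNReal.ofReal (r ^ N) * κ) :=
            mul_le_mul_left hfarint _
        _ = ENNReal.ofReal (2 * c1 * κ.toReal * r ^ 2) := by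
            have h2c1 : (0:ℝ) ≤ 2 * c1 * r ^ ((2:ℝ) - N) := by
              nlinarith [Real.rpow_nonneg hr.le ((2:ℝ) - N), hc1pos.le,
                mul_nonneg hc1pos.le (Real.rpow_nonneg hr.le ((2:ℝ) - N))]
            have hrr : r ^ ((2:ℝ) - N) * r ^ (N:ℕ) = r ^ 2 := by
              rw [← Real.rpow_natCast r N, ← Real.rpow_add hr, ← Real.rpow_natCast r 2]
              congr 1
              push_cast
              ring
            calc ENNReal.ofReal (2 * c1 * r ^ ((2:ℝ) - N)) * (ENNReal.ofReal (r ^ N) * κ)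
                = ENNReal.ofReal (2 * c1 * r ^ 2) * κ := by
                  rw [← mul_assoc, ← ENNReal.ofReal_mul h2c1]
                  congr 2
                  calc 2 * c1 * r ^ ((2:ℝ) - N) * r ^ N
                      = 2 * c1 * (r ^ ((2:ℝ) - N) * r ^ (N:ℕ)) := by ring
                    _ = 2 * c1 * r ^ 2 := by rw [hrr]
              _ = ENNReal.ofReal (2 * c1 * κ.toReal * r ^ 2) := by
                  have h2c1' : (0:ℝ) ≤ 2 * c1 * r ^ 2 :=
                    mul_nonneg (mul_nonneg (by norm_num) hc1pos.le) (sq_nonneg r)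
                  conv_lhs => rw [← ENNReal.ofReal_toReal hκfin]
                  rw [← ENNReal.ofReal_mul h2c1']
                  congr 1
                  ring
    calc (∫⁻ t in Ioc (0:ℝ) a, ∫⁻ x in B, ENNReal.ofReal (g t x))
          + ∫⁻ t in Ioo a T, ∫⁻ x in B, ENNReal.ofReal (g t x)
        ≤ ENNReal.ofReal (2 * c1 * κ.toReal * r ^ 2) + ENNReal.ofReal (r ^ 2) :=
          add_le_add hfar hnear
      _ = ENNReal.ofReal (2 * c1 * κ.toReal * r ^ 2 + r ^ 2) := by
          rw [← ENNReal.ofReal_add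
            (mul_nonneg (mul_nonneg (mul_nonneg (by norm_num : (0:ℝ) ≤ 2) hc1pos.le) hκnn)
              (sq_nonneg r)) (sq_nonneg r)]
      _ = ENNReal.ofReal ((1 + 2 * c1 * κ.toReal) * r ^ 2) := by congr 1; ring
end

section
/- Let N ≥ 1, r > 0, s > 0 and a ∈ ℝ^N. Then ∫_{{y ∈ ℝ^N : |y| ≤ r}} exp(-|y - a|²/(4s)) dy ≤ ∫_{{y ∈ ℝ^N : |y| ≤ r}} exp(-|y|²/(4s)) dy. That is, the Gaussian integral over a ball centered at the origin dominates the corresponding integral of the Gaussian centered at any other point a over the same ball. -/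
open MeasureTheory Set

theorem stmt9 (N : ℕ) (hN : 1 ≤ N) (r s : ℝ) (hr : 0 < r) (hs : 0 < s)
    (a : EuclideanSpace ℝ (Fin N)) :
    ∫ y in Metric.closedBall (0 : EuclideanSpace ℝ (Fin N)) r,
        Real.exp (-‖y - a‖ ^ 2 / (4 * s)) ≤
      ∫ y in Metric.closedBall (0 : EuclideanSpace ℝ (Fin N)) r,
        Real.exp (-‖y‖ ^ 2 / (4 * s)) := by
  set f : EuclideanSpace ℝ (Fin N) → ℝ := fun z => Real.exp (-‖z‖ ^ 2 / (4 * s)) with hf_def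
  have hf : Continuous f := by fun_prop
  set T : Set (EuclideanSpace ℝ (Fin N)) := Metric.closedBall 0 r with hT_def
  set S : Set (EuclideanSpace ℝ (Fin N)) := Metric.closedBall (-a) r with hS_def
  have hTm : MeasurableSet T := measurableSet_closedBall
  have hSm : MeasurableSet S := measurableSet_closedBall
  -- change of variables: LHS equals ∫ over S of f
  have hind : ∀ y : EuclideanSpace ℝ (Fin N),
      T.indicator (fun y => f (y - a)) y = S.indicator f (y - a) := by
    intro y
    by_cases hy : y ∈ T
    · have hy' : y - a ∈ S := by
        simp only [hS_def, Metric.mem_closedBall, dist_eq_norm]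
        have : y - a - -a = y := by abel
        rw [this]
        simpa [hT_def, Metric.mem_closedBall, dist_zero_right] using hy
      rw [Set.indicator_of_mem hy, Set.indicator_of_mem hy']
    · have hy' : y - a ∉ S := by
        simp only [hS_def, Metric.mem_closedBall, dist_eq_norm]
        have h2 : y - a - -a = y := by abel
        rw [h2]
        simpa [hT_def, Metric.mem_closedBall, dist_zero_right] using hy
      rw [Set.indicator_of_notMem hy, Set.indicator_of_notMem hy']
  have hsub : (∫ y in T, Real.exp (-‖y - a‖ ^ 2 / (4 * s))) = ∫ z in S, f z := by
    calc (∫ y in T, Real.exp (-‖y - a‖ ^ 2 / (4 * s)))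
        = ∫ y, T.indicator (fun y => f (y - a)) y := (integral_indicator hTm).symm
      _ = ∫ y, S.indicator f (y - a) := by simp_rw [hind]
      _ = ∫ z, S.indicator f z := integral_sub_right_eq_self (S.indicator f) a
      _ = ∫ z in S, f z := integral_indicator hSm
  rw [hsub]
  -- integrability
  have hcS : IsCompact S := isCompact_closedBall _ _
  have hcT : IsCompact T := isCompact_closedBall _ _
  have hfS : IntegrableOn f S := hf.continuousOn.integrableOn_compact hcS
  have hfT : IntegrableOn f T := hf.continuousOn.integrableOn_compact hcT
  -- split both integrals
  have hsplitS : (∫ z in S, f z) = (∫ z in S ∩ T, f z) + ∫ z in S \ T, f z :=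
    (integral_inter_add_diff hTm hfS).symm
  have hsplitT : (∫ z in T, f z) = (∫ z in S ∩ T, f z) + ∫ z in T \ S, f z := by
    rw [Set.inter_comm]
    exact (integral_inter_add_diff hSm hfT).symm
  rw [hsplitS, hsplitT]
  have key : (∫ z in S \ T, f z) ≤ ∫ z in T \ S, f z := by
    set K : ℝ := Real.exp (-r ^ 2 / (4 * s)) with hK_def
    have hvolST : volume (S \ T) ≠ ⊤ :=
      ((measure_mono Set.diff_subset).trans_lt hcS.measure_lt_top).ne
    have hvolTS : volume (T \ S) ≠ ⊤ :=
      ((measure_mono Set.diff_subset).trans_lt hcT.measure_lt_top).ne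
    have hvol_eq : volume (S \ T) = volume (T \ S) := by
      have h1 : volume (S \ T) + volume (S ∩ T) = volume S := measure_diff_add_inter S hTm
      have h2 : volume (T \ S) + volume (T ∩ S) = volume T := measure_diff_add_inter T hSm
      have h3 : volume S = volume T := by
        exact Measure.addHaar_closedBall_center volume (-a) r
      have h4 : volume (T ∩ S) = volume (S ∩ T) := by rw [Set.inter_comm]
      have hIne : volume (S ∩ T) ≠ ⊤ :=
        ((measure_mono Set.inter_subset_left).trans_lt hcS.measure_lt_top).ne
      have h5 : volume (S \ T) + volume (S ∩ T) = volume (T \ S) + volume (S ∩ T) := by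
        rw [h1, h3, ← h2, h4]
      exact (ENNReal.add_left_inj hIne).1 h5
    have hub : (∫ z in S \ T, f z) ≤ K * (volume (S \ T)).toReal := by
      have h6 : (∫ z in S \ T, f z) ≤ ∫ _ in S \ T, K := by
        apply setIntegral_mono_on (hfS.mono_set Set.diff_subset)
          (integrableOn_const hvolST)
          (hSm.diff hTm)
        intro x hx
        have hx' : r < ‖x‖ := by
          have := hx.2
          simpa [hT_def, Metric.mem_closedBall, dist_zero_right, not_le] using this
        have h7 : r ^ 2 ≤ ‖x‖ ^ 2 := by nlinarith [norm_nonneg x]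
        simp only [hf_def, hK_def]
        apply Real.exp_le_exp.2
        apply div_le_div_of_nonneg_right _ (by linarith : (0:ℝ) ≤ 4 * s)
        linarith
      calc (∫ z in S \ T, f z) ≤ ∫ _ in S \ T, K := h6
        _ = K * (volume (S \ T)).toReal := by
            rw [setIntegral_const, smul_eq_mul, mul_comm, measureReal_def]
    have hlb : K * (volume (T \ S)).toReal ≤ ∫ z in T \ S, f z := by
      have h6 : (∫ _ in T \ S, K) ≤ ∫ z in T \ S, f z := by
        apply setIntegral_mono_on
          (integrableOn_const hvolTS)
          (hfT.mono_set Set.diff_subset) (hTm.diff hSm)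
        intro x hx
        have hx' : ‖x‖ ≤ r := by
          have := hx.1
          simpa [hT_def, Metric.mem_closedBall, dist_zero_right] using this
        have h7 : ‖x‖ ^ 2 ≤ r ^ 2 := by nlinarith [norm_nonneg x]
        simp only [hf_def, hK_def]
        apply Real.exp_le_exp.2
        apply div_le_div_of_nonneg_right _ (by linarith : (0:ℝ) ≤ 4 * s)
        linarith
      calc K * (volume (T \ S)).toReal = ∫ _ in T \ S, K := by
            rw [setIntegral_const, smul_eq_mul, mul_comm, measureReal_def]
        _ ≤ _ := h6
    calc (∫ z in S \ T, f z) ≤ K * (volume (S \ T)).toReal := hub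
      _ = K * (volume (T \ S)).toReal := by rw [hvol_eq]
      _ ≤ ∫ z in T \ S, f z := hlb
  linarith
end

section
/- Let n ≥ 1 be an integer and t > 1. Then the integral of ∏_{j=1}^n (t_j - t_{j-1})^{-1} over the region {(t₁,…,t_n) ∈ ℝ^n : 0 < t₁ < t₂ < ⋯ < t_n < t and t_j - t_{j-1} > 1 for all j = 1,…,n}, where t₀ = 0, is at most (log t)^n. -/
open MeasureTheory Set

/-- For a tuple `t = (t_1, …, t_n)`, `prevVal t j` is `t_{j-1}`, with the
convention `t_0 = 0`. -/
noncomputable def prevVal {n : ℕ} (t : Fin n → ℝ) (j : Fin n) : ℝ :=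
  if _ : (j : ℕ) = 0 then 0
  else t ⟨(j : ℕ) - 1, Nat.lt_of_le_of_lt (Nat.sub_le _ _) j.isLt⟩

lemma prevVal_add {n : ℕ} (x y : Fin n → ℝ) (j : Fin n) :
    prevVal (x + y) j = prevVal x j + prevVal y j := by
  unfold prevVal; split_ifs <;> simp

lemma prevVal_smul {n : ℕ} (c : ℝ) (x : Fin n → ℝ) (j : Fin n) :
    prevVal (c • x) j = c * prevVal x j := by
  unfold prevVal; split_ifs <;> simp

/-- The linear map sending a tuple to its tuple of consecutive gaps. -/
noncomputable def gapMap (n : ℕ) : (Fin n → ℝ) →ₗ[ℝ] (Fin n → ℝ) where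
  toFun v := fun j => v j - prevVal v j
  map_add' x y := by funext j; simp [prevVal_add]; ring
  map_smul' c x := by funext j; simp [prevVal_smul]; ring

lemma det_gapMap (n : ℕ) : LinearMap.det (gapMap n) = 1 := by
  classical
  rw [← LinearMap.det_toMatrix']
  rw [Matrix.det_of_lowerTriangular _ ?ht]
  case ht =>
    intro i j hij
    simp only [OrderDual.toDual_lt_toDual] at hij
    rw [LinearMap.toMatrix'_apply]
    rw [show (Pi.single j (1:ℝ) : Fin n → ℝ) = fun k => if k = j then (1:ℝ) else 0 from
      funext fun k => Pi.single_apply j 1 k]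
    show (fun k => if k = j then (1:ℝ) else 0) i
        - prevVal (fun k => if k = j then (1:ℝ) else 0) i = 0
    have h1 : i ≠ j := ne_of_lt hij
    have hvlt : (i : ℕ) < (j : ℕ) := hij
    unfold prevVal
    beta_reduce
    rw [if_neg h1]
    split_ifs with h0 hj
    · simp
    · exfalso
      have : (i : ℕ) - 1 = (j : ℕ) := congrArg Fin.val hj
      omega
    · simp
  · apply Finset.prod_eq_one
    intro i _
    rw [LinearMap.toMatrix'_apply]
    rw [show (Pi.single i (1:ℝ) : Fin n → ℝ) = fun k => if k = i then (1:ℝ) else 0 from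
      funext fun k => Pi.single_apply i 1 k]
    show (fun k => if k = i then (1:ℝ) else 0) i
        - prevVal (fun k => if k = i then (1:ℝ) else 0) i = 1
    unfold prevVal
    beta_reduce
    rw [if_pos rfl]
    split_ifs with h0 hj
    · simp
    · exfalso
      have : (i : ℕ) - 1 = (i : ℕ) := congrArg Fin.val hj
      omega
    · simp

lemma gapMap_mp (n : ℕ) : MeasurePreserving (gapMap n) volume volume := by
  have hdet : LinearMap.det (gapMap n) ≠ 0 := by rw [det_gapMap]; norm_num
  refine ⟨(gapMap n).continuous_of_finiteDimensional.measurable, ?_⟩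
  rw [Real.map_linearMap_volume_pi_eq_smul_volume_pi hdet, det_gapMap]
  simp

lemma gapMap_emb (n : ℕ) : MeasurableEmbedding (gapMap n) := by
  have hdet : LinearMap.det (gapMap n) ≠ 0 := by rw [det_gapMap]; norm_num
  exact ((gapMap n).equivOfDetNeZero hdet).toContinuousLinearEquiv.toHomeomorph.measurableEmbedding

theorem stmt12 (n : ℕ) (hn : 0 < n) (t : ℝ) (ht : 1 < t) :
    ∫ v in {v : Fin n → ℝ | 0 < v ⟨0, hn⟩ ∧ StrictMono v ∧ (∀ j, v j < t) ∧
        ∀ j, 1 < v j - prevVal v j},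
      ∏ j, (v j - prevVal v j)⁻¹ ≤ (Real.log t) ^ n := by
  classical
  set S : Set (Fin n → ℝ) := {v : Fin n → ℝ | 0 < v ⟨0, hn⟩ ∧ StrictMono v ∧ (∀ j, v j < t) ∧
        ∀ j, 1 < v j - prevVal v j} with hS
  set box : Set (Fin n → ℝ) := Set.pi univ (fun _ => Ioo 1 t) with hbox
  have hboxm : MeasurableSet box := MeasurableSet.univ_pi fun _ => measurableSet_Ioo
  set T : Set (Fin n → ℝ) := gapMap n ⁻¹' box with hT
  have hTm : MeasurableSet T := hboxm.preimage (gapMap_mp n).measurable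
  -- 1D ingredients
  have hIoo : IntegrableOn (fun x : ℝ => x⁻¹) (Ioo 1 t) := by
    have : IntervalIntegrable (fun x : ℝ => x⁻¹) volume 1 t := by
      apply intervalIntegral.intervalIntegrable_inv
      · intro x hx
        rw [uIcc_of_le ht.le] at hx
        linarith [hx.1]
      · exact continuousOn_id
    exact (this.1).mono_set Ioo_subset_Ioc_self
  have hlog : ∫ x in Ioo 1 t, x⁻¹ = Real.log t := by
    rw [← MeasureTheory.integral_Ioc_eq_integral_Ioo,
      ← intervalIntegral.integral_of_le ht.le, integral_inv_of_pos one_pos (by linarith),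
      div_one]
  set g0 : ℝ → ℝ := (Ioo 1 t).indicator (fun x => x⁻¹) with hg0
  have hg0i : Integrable g0 := (integrable_indicator_iff measurableSet_Ioo).mpr hIoo
  -- indicator identity
  have hind : ∀ u : Fin n → ℝ,
      box.indicator (fun u : Fin n → ℝ => ∏ j, (u j)⁻¹) u = ∏ j, g0 (u j) := by
    intro u
    by_cases h : u ∈ box
    · rw [indicator_of_mem h]
      exact (Finset.prod_congr rfl fun j _ =>
        (indicator_of_mem (h j (Set.mem_univ j)) _).symm)
    · rw [indicator_of_notMem h]
      obtain ⟨j, hj⟩ : ∃ j, u j ∉ Ioo 1 t := by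
        by_contra hc
        push_neg at hc
        exact h fun j _ => hc j
      exact (Finset.prod_eq_zero (Finset.mem_univ j) (indicator_of_notMem hj _)).symm
  -- integral over the box
  have hgbox : IntegrableOn (fun u : Fin n → ℝ => ∏ j, (u j)⁻¹) box := by
    rw [← integrable_indicator_iff hboxm]
    have : box.indicator (fun u : Fin n → ℝ => ∏ j, (u j)⁻¹) = fun u => ∏ j, g0 (u j) :=
      funext hind
    rw [this]
    exact Integrable.fintype_prod (f := fun _ : Fin n => g0) fun _ => hg0i
  have hboxint : ∫ u in box, ∏ j, (u j)⁻¹ = (Real.log t) ^ n := by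
    rw [← integral_indicator hboxm]
    simp_rw [hind]
    rw [MeasureTheory.integral_fintype_prod_volume_eq_prod (f := fun _ : Fin n => g0)]
    have hg0int : ∫ x, g0 x = Real.log t := by
      rw [hg0, integral_indicator measurableSet_Ioo]
      exact hlog
    simp [hg0int]
  -- transfer to T
  have hTint : ∫ v in T, ∏ j, (v j - prevVal v j)⁻¹ = (Real.log t) ^ n := by
    rw [hT, ← hboxint]
    exact (gapMap_mp n).setIntegral_preimage_emb (gapMap_emb n)
      (fun u => ∏ j, (u j)⁻¹) box
  -- integrability on T
  have hTi : IntegrableOn (fun v : Fin n → ℝ => ∏ j, (v j - prevVal v j)⁻¹) T := by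
    rw [← integrable_indicator_iff hTm]
    have : T.indicator (fun v : Fin n → ℝ => ∏ j, (v j - prevVal v j)⁻¹)
        = (box.indicator (fun u : Fin n → ℝ => ∏ j, (u j)⁻¹)) ∘ (gapMap n) := by
      funext v
      simp only [Function.comp_apply]
      by_cases h : v ∈ T
      · rw [indicator_of_mem h, indicator_of_mem (Set.mem_preimage.mp h)]
        rfl
      · rw [indicator_of_notMem h,
          indicator_of_notMem (fun hc => h (Set.mem_preimage.mpr hc))]
    rw [this]
    exact ((gapMap_mp n).integrable_comp_emb (gapMap_emb n)).mpr
      ((integrable_indicator_iff hboxm).mpr hgbox)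
  -- S ⊆ T
  have hST : S ⊆ T := by
    intro v hv
    obtain ⟨h0, hmono, hlt, hgap⟩ := hv
    intro j _
    refine ⟨hgap j, ?_⟩
    have hprev : 0 ≤ prevVal v j := by
      unfold prevVal
      split_ifs with h
      · exact le_refl 0
      · exact le_of_lt (lt_of_lt_of_le h0 (hmono.monotone (Fin.mk_le_mk.mpr (Nat.zero_le _))))
    have hg : (gapMap n) v j = v j - prevVal v j := rfl
    rw [hg]
    linarith [hlt j]
  -- nonnegativity on T
  have hpos : 0 ≤ᵐ[volume.restrict T] fun v : Fin n → ℝ => ∏ j, (v j - prevVal v j)⁻¹ := by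
    refine (ae_restrict_iff' hTm).mpr (ae_of_all _ fun v hv => ?_)
    exact Finset.prod_nonneg fun j _ =>
      inv_nonneg.mpr (le_of_lt (lt_trans one_pos (hv j (Set.mem_univ j)).1))
  calc ∫ v in S, ∏ j, (v j - prevVal v j)⁻¹
      ≤ ∫ v in T, ∏ j, (v j - prevVal v j)⁻¹ :=
        setIntegral_mono_set hTi hpos (HasSubset.Subset.eventuallyLE hST)
    _ = (Real.log t) ^ n := hTint
end

section
/- Let N ≥ 1 and H > 0 with HN < 1, and let t > 0. Let (Ω, 𝒜, P) be a probability space and ξ : [0,∞) × Ω → ℝ^N a jointly measurable stochastic process. Let f : ℝ^N → [0,∞) be measurable with ‖f‖₁ = ∫_{ℝ^N} f < ∞. Assume that for every integer n ≥ 1 and all times 0 < t₁ < t₂ < ⋯ < t_n ≤ t (with t₀ = 0), E[f(ξ_{t₁}) ⋯ f(ξ_{t_n})] ≤ (2/π)^{nN/2} ‖f‖₁^n ∏_{j=1}^n (t_j - t_{j-1})^{-HN}. Then, setting Z_t = ∫₀^t f(ξ_s) ds and C₃ = (2/π)^{1/2} (1 - HN)^{-1} ‖f‖₁, one has E[Z_t^n]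 ≤ n! C₃^n t^{(1-HN)n} for every integer n ≥ 1. -/
open MeasureTheory Set Filter ENNReal

lemma lintegral_pow_eq_pi {φ : ℝ → ℝ≥0∞} (hφ : Measurable φ) :
    ∀ n : ℕ, (∫⁻ s, φ s) ^ n = ∫⁻ v : Fin n → ℝ, ∏ j, φ (v j) := by
  intro n
  induction n with
  | zero =>
      simp only [pow_zero, Finset.univ_eq_empty, Finset.prod_empty, lintegral_one]
      rw [MeasureTheory.volume_pi, Measure.pi_univ]
      simp
  | succ n ih =>
      have hmp := volume_preserving_piFinSuccAbove (fun _ : Fin (n + 1) => ℝ) 0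
      have hmeas : Measurable fun p : ℝ × (Fin n → ℝ) => φ p.1 * ∏ j, φ (p.2 j) :=
        (hφ.comp measurable_fst).mul
          (Finset.measurable_prod _ fun j _ =>
            hφ.comp ((measurable_pi_apply j).comp measurable_snd))
      have key := hmp.lintegral_comp hmeas
      have hfun : ∀ v : Fin (n + 1) → ℝ,
          (fun p : ℝ × (Fin n → ℝ) => φ p.1 * ∏ j, φ (p.2 j))
            ((MeasurableEquiv.piFinSuccAbove (fun _ => ℝ) 0) v)
          = ∏ j, φ (v j) := by
        intro v
        have : (MeasurableEquiv.piFinSuccAbove (fun _ : Fin (n+1) => ℝ) 0) v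
            = (v 0, fun j => v ((0 : Fin (n+1)).succAbove j)) := rfl
        rw [this]
        simp only [Fin.succAbove_zero]
        rw [Fin.prod_univ_succ]
      simp only [hfun] at key
      have h2 : Measurable fun w : Fin n → ℝ => ∏ j, φ (w j) :=
        Finset.measurable_prod _ fun j _ => hφ.comp (measurable_pi_apply j)
      rw [key, Measure.volume_eq_prod,
        lintegral_prod_mul hφ.aemeasurable h2.aemeasurable]
      rw [pow_succ, ih, mul_comm]

lemma prevVal_castSucc {n : ℕ} (v : Fin (n + 1) → ℝ) (j : Fin n) :
    prevVal v (Fin.castSucc j) = prevVal (v ∘ Fin.castSucc) j := by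
  unfold prevVal
  simp only [Fin.coe_castSucc, Function.comp_apply]
  split
  · rfl
  · congr 1

lemma prevVal_last {n : ℕ} (v : Fin (n + 1) → ℝ) :
    prevVal v (Fin.last n)
      = if h : n = 0 then 0
        else (v ∘ Fin.castSucc) ⟨n - 1, by omega⟩ := by
  unfold prevVal
  simp only [Fin.val_last, Function.comp_apply]
  split
  · rfl
  · congr 1

lemma lintegral_prod_prevVal {h : ℝ → ℝ≥0∞} (hh : Measurable h) :
    ∀ n : ℕ, ∫⁻ v : Fin n → ℝ, ∏ j, h (v j - prevVal v j) = (∫⁻ x, h x) ^ n := by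
  intro n
  induction n with
  | zero =>
      simp only [pow_zero, Finset.univ_eq_empty, Finset.prod_empty, lintegral_one]
      rw [MeasureTheory.volume_pi, Measure.pi_univ]
      simp
  | succ n ih =>
      -- previous-value function for the appended coordinate
      set pr : (Fin n → ℝ) → ℝ :=
        fun w => if h : n = 0 then 0 else w ⟨n - 1, by omega⟩ with hpr
      have hprm : Measurable pr := by
        rw [hpr]; split
        · exact measurable_const
        · exact measurable_pi_apply _
      have h2 : Measurable fun w : Fin n → ℝ => ∏ j, h (w j - prevVal w j) := by
        refine Finset.measurable_prod _ fun j _ => hh.comp ?_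
        have : Measurable fun w : Fin n → ℝ => prevVal w j := by
          unfold prevVal; split
          · exact measurable_const
          · exact measurable_pi_apply _
        exact (measurable_pi_apply j).sub this
      have hmeas : Measurable fun p : ℝ × (Fin n → ℝ) =>
          (∏ j, h (p.2 j - prevVal p.2 j)) * h (p.1 - pr p.2) :=
        (h2.comp measurable_snd).mul
          (hh.comp ((measurable_fst.sub (hprm.comp measurable_snd))))
      have hmp := volume_preserving_piFinSuccAbove (fun _ : Fin (n + 1) => ℝ) (Fin.last n)
      have key := hmp.lintegral_comp hmeas
      have hfun : ∀ v : Fin (n + 1) → ℝ,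
          (fun p : ℝ × (Fin n → ℝ) => (∏ j, h (p.2 j - prevVal p.2 j)) * h (p.1 - pr p.2))
            ((MeasurableEquiv.piFinSuccAbove (fun _ => ℝ) (Fin.last n)) v)
          = ∏ j, h (v j - prevVal v j) := by
        intro v
        have he : (MeasurableEquiv.piFinSuccAbove (fun _ : Fin (n+1) => ℝ) (Fin.last n)) v
            = (v (Fin.last n), fun j => v ((Fin.last n).succAbove j)) := rfl
        rw [he]
        simp only [Fin.succAbove_last]
        rw [Fin.prod_univ_castSucc]
        congr 1
      simp only [hfun] at key
      rw [key, Measure.volume_eq_prod, lintegral_prod_symm _ hmeas.aemeasurable]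
      have inner : ∀ w : Fin n → ℝ,
          (∫⁻ x, (∏ j, h (w j - prevVal w j)) * h (x - pr w))
            = (∏ j, h (w j - prevVal w j)) * ∫⁻ x, h x := by
        intro w
        rw [lintegral_const_mul _ (show Measurable fun x : ℝ => h (x - pr w) from
          hh.comp (measurable_sub_const _))]
        congr 1
        simp only [sub_eq_add_neg]
        exact lintegral_add_right_eq_self (fun x => h x) (-pr w)
      simp only [inner]
      rw [lintegral_mul_const _ h2, ih, pow_succ]

lemma diag_null {n : ℕ} {i j : Fin n} (hij : i ≠ j) :
    (volume : Measure (Fin n → ℝ)) {v | v i = v j} = 0 := by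
  cases n with
  | zero => exact i.elim0
  | succ m =>
      obtain ⟨k, hk⟩ := Fin.exists_succAbove_eq hij.symm
      have hmp := volume_preserving_piFinSuccAbove (fun _ : Fin (m + 1) => ℝ) i
      have hA : MeasurableSet {p : ℝ × (Fin m → ℝ) | p.1 = p.2 k} :=
        measurableSet_eq_fun measurable_fst ((measurable_pi_apply k).comp measurable_snd)
      have hpre : {v : Fin (m + 1) → ℝ | v i = v j}
          = (MeasurableEquiv.piFinSuccAbove (fun _ => ℝ) i) ⁻¹' {p | p.1 = p.2 k} := by
        ext v
        have he : (MeasurableEquiv.piFinSuccAbove (fun _ : Fin (m+1) => ℝ) i) v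
            = (v i, fun l => v (i.succAbove l)) := rfl
        simp only [mem_setOf_eq, mem_preimage, he]
        rw [hk]
      rw [hpre, hmp.measure_preimage hA.nullMeasurableSet]
      rw [Measure.volume_eq_prod, Measure.prod_apply hA]
      have : ∀ x : ℝ, (volume : Measure (Fin m → ℝ)) (Prod.mk x ⁻¹' {p : ℝ × (Fin m → ℝ) | p.1 = p.2 k}) = 0 := by
        intro x
        have : (Prod.mk x ⁻¹' {p : ℝ × (Fin m → ℝ) | p.1 = p.2 k}) = {w : Fin m → ℝ | w k = x} := by
          ext w; simp [eq_comm]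
        rw [this, MeasureTheory.volume_pi]
        exact Measure.pi_hyperplane (fun _ : Fin m => (volume : Measure ℝ)) k x
      simp only [this, lintegral_zero]

lemma exists_sort_strictMono {n : ℕ} {v : Fin n → ℝ} (hv : Function.Injective v) :
    ∃ σ : Equiv.Perm (Fin n), StrictMono (v ∘ σ) :=
  ⟨Tuple.sort v, (Tuple.monotone_sort v).strictMono_of_injective
    (hv.comp (Tuple.sort v).injective)⟩

lemma lintegral_rpow_indicator {H : ℝ} {N : ℕ} (hH : 0 < H * N) (hHN : H * N < 1)
    {t : ℝ} (ht : 0 < t) :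
    ∫⁻ x, (Ioc (0:ℝ) t).indicator (fun x => ENNReal.ofReal (x ^ (-(H * N)))) x
      = ENNReal.ofReal (t ^ (1 - H * N) / (1 - H * N)) := by
  rw [lintegral_indicator measurableSet_Ioc]
  have hint : IntegrableOn (fun x : ℝ => x ^ (-(H * N))) (Ioc 0 t) := by
    have := intervalIntegral.intervalIntegrable_rpow' (a := 0) (b := t)
      (r := -(H * N)) (by linarith)
    rwa [intervalIntegrable_iff, uIoc_of_le ht.le] at this
  rw [← MeasureTheory.ofReal_integral_eq_lintegral_ofReal hint]
  · congr 1
    rw [← intervalIntegral.integral_of_le ht.le]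
    rw [integral_rpow (Or.inl (by linarith))]
    rw [Real.zero_rpow (by linarith)]
    norm_num
    ring_nf
  · exact (ae_restrict_iff' measurableSet_Ioc).2 (Filter.Eventually.of_forall fun x hx => by
      simpa using Real.rpow_nonneg hx.1.le (-(H * N)))
theorem stmt15 (N : ℕ) (hN : 1 ≤ N) (H : ℝ) (hH : 0 < H) (hHN : H * N < 1)
    (t : ℝ) (ht : 0 < t)
    {Ω : Type*} [MeasurableSpace Ω] (P : Measure Ω) [IsProbabilityMeasure P]
    -- a jointly measurable process ξ
    (ξ : ℝ → Ω → EuclideanSpace ℝ (Fin N))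
    (hξ : Measurable fun p : ℝ × Ω => ξ p.1 p.2)
    -- f ≥ 0 with finite L¹ norm
    (f : EuclideanSpace ℝ (Fin N) → ℝ) (hf0 : ∀ x, 0 ≤ f x) (hfm : Measurable f)
    (hf1 : Integrable f)
    -- the moment bound for the increment densities, for times in (0, t]
    (hmom : ∀ (n : ℕ) (v : Fin n → ℝ), 0 < n →
      (∀ j, prevVal v j < v j) → (∀ j, v j ≤ t) →
      ∫⁻ ω, ∏ j, ENNReal.ofReal (f (ξ (v j) ω)) ∂P ≤
        ENNReal.ofReal ((2 / Real.pi) ^ ((n : ℝ) * N / 2) * (∫ x, f x) ^ n *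
          ∏ j, (v j - prevVal v j) ^ (-(H * N)))) :
    -- conclusion: E[Z_t^n] ≤ n! C₃^n t^{(1-HN)n} with Z_t = ∫₀^t f(ξ_s) ds and
    -- C₃ = √(2/π) (1 - HN)⁻¹ ‖f‖₁
    ∀ n : ℕ, 0 < n →
      ∫⁻ ω, (∫⁻ s in Ioc (0:ℝ) t, ENNReal.ofReal (f (ξ s ω))) ^ n ∂P ≤
        ENNReal.ofReal ((n.factorial : ℝ) *
          ((2 / Real.pi) ^ ((1:ℝ) / 2) * (1 - H * N)⁻¹ * (∫ x, f x)) ^ n *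
          t ^ ((1 - H * N) * n)) := by
  intro n hn
  have hπ : (0:ℝ) < 2 / Real.pi := div_pos two_pos Real.pi_pos
  have hπ1 : (2:ℝ) / Real.pi ≤ 1 := (div_le_one Real.pi_pos).2 Real.two_le_pi
  have hN1 : (1:ℝ) ≤ (N:ℝ) := by exact_mod_cast hN
  have hHN0 : 0 < H * N := mul_pos hH (by linarith)
  have h1HN : 0 < 1 - H * N := by linarith
  have hfI : 0 ≤ ∫ x, f x := integral_nonneg hf0
  set c : ℝ := (2 / Real.pi) ^ ((n : ℝ) * N / 2) * (∫ x, f x) ^ n with hc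
  have hc0 : 0 ≤ c := mul_nonneg (Real.rpow_nonneg hπ.le _) (pow_nonneg hfI n)
  set I : ℝ := t ^ (1 - H * N) / (1 - H * N) with hI
  have hI0 : 0 ≤ I := div_nonneg (Real.rpow_nonneg ht.le _) h1HN.le
  -- the kernel
  set g : ℝ → Ω → ℝ≥0∞ :=
    fun s ω => (Ioc (0:ℝ) t).indicator (fun u => ENNReal.ofReal (f (ξ u ω))) s with hg
  have hbase : Measurable fun p : ℝ × Ω => ENNReal.ofReal (f (ξ p.1 p.2)) :=
    ENNReal.measurable_ofReal.comp (hfm.comp hξ)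
  have hgm : Measurable fun p : ℝ × Ω => g p.1 p.2 := by
    have : (fun p : ℝ × Ω => g p.1 p.2)
        = fun p => if p.1 ∈ Ioc (0:ℝ) t then ENNReal.ofReal (f (ξ p.1 p.2)) else 0 := by
      funext p; rw [hg]; simp [Set.indicator_apply]
    rw [this]
    exact Measurable.ite (measurable_fst measurableSet_Ioc) hbase measurable_const
  have hKm : Measurable fun p : (Fin n → ℝ) × Ω => ∏ j, g (p.1 j) p.2 := by
    refine Finset.measurable_prod _ fun j _ => ?_
    have hm2 : Measurable fun p : (Fin n → ℝ) × Ω => (p.1 j, p.2) :=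
      ((measurable_pi_apply j).comp measurable_fst).prodMk measurable_snd
    exact hgm.comp hm2
  set F : (Fin n → ℝ) → ℝ≥0∞ := fun v => ∫⁻ ω, ∏ j, g (v j) ω ∂P with hF
  have hFm : Measurable F := hKm.lintegral_prod_right'
  have hFsymm : ∀ (σ : Equiv.Perm (Fin n)) (v : Fin n → ℝ), F (v ∘ σ) = F v := by
    intro σ v
    rw [hF]
    exact lintegral_congr fun ω => Equiv.prod_comp σ (fun i => g (v i) ω)
  -- the simplex-type sets
  set S : Equiv.Perm (Fin n) → Set (Fin n → ℝ) := fun σ => {v | StrictMono (v ∘ σ)} with hS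
  have hSm : ∀ σ, MeasurableSet (S σ) := by
    intro σ
    have : S σ = ⋂ (i : Fin n) (j : Fin n) (_ : i < j), {v : Fin n → ℝ | v (σ i) < v (σ j)} := by
      ext v
      simp only [hS, mem_setOf_eq, mem_iInter]
      exact ⟨fun h i j hij => h hij, fun h a b hab => h a b hab⟩
    rw [this]
    exact MeasurableSet.iInter fun i => MeasurableSet.iInter fun j =>
      MeasurableSet.iInter fun _ =>
        measurableSet_lt (measurable_pi_apply _) (measurable_pi_apply _)
  have hinj_ae : ∀ᵐ v : Fin n → ℝ, Function.Injective v := by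
    rw [ae_iff]
    refine measure_mono_null (fun v hv => ?_)
      (measure_iUnion_null fun i : Fin n => measure_iUnion_null fun j : Fin n =>
        measure_iUnion_null fun hij : i ≠ j => diag_null hij)
    simp only [mem_setOf_eq, Function.Injective, not_forall] at hv
    obtain ⟨i, j, hij, hne⟩ := hv
    exact mem_iUnion.2 ⟨i, mem_iUnion.2 ⟨j, mem_iUnion.2 ⟨hne, hij⟩⟩⟩
  -- the one-variable bound function
  set h : ℝ → ℝ≥0∞ :=
    fun x => (Ioc (0:ℝ) t).indicator (fun u => ENNReal.ofReal (u ^ (-(H * N)))) x with hh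
  have hhm : Measurable h :=
    (ENNReal.measurable_ofReal.comp (measurable_id.pow_const (-(H * N)))).indicator
      measurableSet_Ioc
  have hprodm : Measurable fun v : Fin n → ℝ => ∏ j, h (v j - prevVal v j) := by
    refine Finset.measurable_prod _ fun j _ => hhm.comp ?_
    have : Measurable fun w : Fin n → ℝ => prevVal w j := by
      unfold prevVal; split
      · exact measurable_const
      · exact measurable_pi_apply _
    exact (measurable_pi_apply j).sub this
  -- pointwise bound on the ordered simplex
  have hpoint : ∀ v : Fin n → ℝ,
      (S 1).indicator F v ≤ ENNReal.ofReal c * ∏ j, h (v j - prevVal v j) := by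
    intro v
    by_cases hv : v ∈ S 1
    swap
    · rw [indicator_of_notMem hv]; exact zero_le
    rw [indicator_of_mem hv]
    have hsm : StrictMono v := by
      have : v ∘ ⇑(1 : Equiv.Perm (Fin n)) = v := by funext i; simp
      have h' := hv
      rw [hS] at h'
      simpa [this] using h'
    by_cases hall : ∀ j, v j ∈ Ioc (0:ℝ) t
    · have h1 : ∀ j, prevVal v j < v j := by
        intro j
        unfold prevVal
        split
        · exact (hall j).1
        · next h0 =>
            refine hsm ?_
            rw [Fin.lt_def]
            exact Nat.sub_lt (Nat.pos_of_ne_zero h0) one_pos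
      have hprev0 : ∀ j, 0 ≤ prevVal v j := by
        intro j
        unfold prevVal
        split
        · exact le_refl 0
        · exact ((hall _).1).le
      have h2 : ∀ j, v j ≤ t := fun j => (hall j).2
      have hb := hmom n v hn h1 h2
      have hFv : F v = ∫⁻ ω, ∏ j, ENNReal.ofReal (f (ξ (v j) ω)) ∂P := by
        rw [hF]
        exact lintegral_congr fun ω => Finset.prod_congr rfl fun j _ => by
          rw [hg]; exact indicator_of_mem (hall j) _
      rw [hFv]
      refine hb.trans (le_of_eq ?_)
      have hmem : ∀ j, v j - prevVal v j ∈ Ioc (0:ℝ) t := by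
        intro j
        exact ⟨by linarith [h1 j], by linarith [h2 j, hprev0 j]⟩
      rw [← hc, ENNReal.ofReal_mul hc0,
        ENNReal.ofReal_prod_of_nonneg fun j _ =>
          Real.rpow_nonneg (by linarith [h1 j]) _]
      congr 1
      exact Finset.prod_congr rfl fun j _ => by
        simp only [hh]
        exact (indicator_of_mem (hmem j)
          (fun u : ℝ => ENNReal.ofReal (u ^ (-(H * (N:ℝ)))))).symm
    · push_neg at hall
      obtain ⟨j0, hj0⟩ := hall
      have hz : F v = 0 := by
        rw [hF]
        have : ∀ ω, ∏ j, g (v j) ω = 0 := fun ω =>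
          Finset.prod_eq_zero (Finset.mem_univ j0)
            (by rw [hg]; exact indicator_of_notMem hj0 _)
        simp [this]
      rw [hz]; exact zero_le
  -- change of variables for each permutation
  have hcov : ∀ σ : Equiv.Perm (Fin n),
      ∫⁻ v, (S σ).indicator F v = ∫⁻ v, (S 1).indicator F v := by
    intro σ
    have hmp := volume_measurePreserving_piCongrLeft (fun _ : Fin n => ℝ) σ
    have hmi : Measurable ((S σ).indicator F) := hFm.indicator (hSm σ)
    rw [← hmp.lintegral_comp hmi]
    refine lintegral_congr fun w => ?_
    have hT : (MeasurableEquiv.piCongrLeft (fun _ : Fin n => ℝ) σ) w = w ∘ ⇑σ.symm := by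
      funext i
      have := MeasurableEquiv.piCongrLeft_apply_apply σ (β := fun _ => ℝ) w (σ.symm i)
      simpa using this
    show (S σ).indicator F ((MeasurableEquiv.piCongrLeft (fun _ : Fin n => ℝ) σ) w)
      = (S 1).indicator F w
    rw [hT]
    have hmem : (w ∘ ⇑σ.symm) ∈ S σ ↔ w ∈ S 1 := by
      simp only [hS, mem_setOf_eq]
      have e1 : (w ∘ ⇑σ.symm) ∘ ⇑σ = w := by funext i; simp
      have e2 : w ∘ ⇑(1 : Equiv.Perm (Fin n)) = w := by funext i; simp
      rw [e1, e2]
    simp only [indicator_apply]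
    rw [if_congr hmem (hFsymm σ.symm w) rfl]
  -- the key chain
  have hmain : ∫⁻ ω, (∫⁻ s in Ioc (0:ℝ) t, ENNReal.ofReal (f (ξ s ω))) ^ n ∂P
      ≤ (n.factorial : ℝ≥0∞) * (ENNReal.ofReal c * ENNReal.ofReal I ^ n) := by
    calc ∫⁻ ω, (∫⁻ s in Ioc (0:ℝ) t, ENNReal.ofReal (f (ξ s ω))) ^ n ∂P
        = ∫⁻ ω, ∫⁻ v : Fin n → ℝ, ∏ j, g (v j) ω ∂volume ∂P := by
          refine lintegral_congr fun ω => ?_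
          rw [← lintegral_indicator measurableSet_Ioc]
          exact lintegral_pow_eq_pi
            (hgm.comp (measurable_id.prodMk measurable_const)) n
      _ = ∫⁻ v : Fin n → ℝ, F v := lintegral_lintegral_swap
            ((hKm.comp measurable_swap).aemeasurable)
      _ ≤ ∫⁻ v : Fin n → ℝ, ∑ σ : Equiv.Perm (Fin n), (S σ).indicator F v := by
          refine lintegral_mono_ae (hinj_ae.mono fun v hv => ?_)
          obtain ⟨σ, hσ⟩ := exists_sort_strictMono hv
          calc F v = (S σ).indicator F v :=
                (indicator_of_mem (show v ∈ S σ from hσ) F).symm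
            _ ≤ ∑ σ' : Equiv.Perm (Fin n), (S σ').indicator F v :=
                Finset.single_le_sum
                  (f := fun σ' : Equiv.Perm (Fin n) => (S σ').indicator F v)
                  (fun _ _ => zero_le) (Finset.mem_univ σ)
      _ = ∑ σ : Equiv.Perm (Fin n), ∫⁻ v, (S σ).indicator F v :=
          lintegral_finset_sum _ fun σ _ => hFm.indicator (hSm σ)
      _ = (n.factorial : ℝ≥0∞) * ∫⁻ v, (S 1).indicator F v := by
          rw [Finset.sum_congr rfl fun σ _ => hcov σ, Finset.sum_const, Finset.card_univ,
            Fintype.card_perm, Fintype.card_fin, nsmul_eq_mul]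
      _ ≤ (n.factorial : ℝ≥0∞) * (ENNReal.ofReal c * ENNReal.ofReal I ^ n) := by
          refine mul_le_mul_right ?_ _
          calc ∫⁻ v, (S 1).indicator F v
              ≤ ∫⁻ v, ENNReal.ofReal c * ∏ j, h (v j - prevVal v j) :=
                lintegral_mono hpoint
            _ = ENNReal.ofReal c * ∫⁻ v, ∏ j, h (v j - prevVal v j) :=
                lintegral_const_mul _ hprodm
            _ = ENNReal.ofReal c * ENNReal.ofReal I ^ n := by
                rw [lintegral_prod_prevVal hhm n, lintegral_rpow_indicator hHN0 hHN ht]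
  refine hmain.trans ?_
  -- pass to a real inequality
  have heq : (n.factorial : ℝ≥0∞) * (ENNReal.ofReal c * ENNReal.ofReal I ^ n)
      = ENNReal.ofReal ((n.factorial : ℝ) * (c * I ^ n)) := by
    rw [← ENNReal.ofReal_natCast n.factorial, ← ENNReal.ofReal_pow hI0,
      ← ENNReal.ofReal_mul hc0,
      ← ENNReal.ofReal_mul (p := (n.factorial : ℝ)) (by positivity)]
  rw [heq]
  refine ENNReal.ofReal_le_ofReal ?_
  have hbn : ((2 / Real.pi) ^ ((1:ℝ) / 2)) ^ n = (2 / Real.pi) ^ ((n:ℝ) / 2) := by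
    rw [← Real.rpow_natCast ((2 / Real.pi) ^ ((1:ℝ) / 2)) n, ← Real.rpow_mul hπ.le]
    congr 1; ring
  have htn : t ^ ((1 - H * N) * (n:ℝ)) = (t ^ (1 - H * N)) ^ n := by
    rw [← Real.rpow_natCast (t ^ (1 - H * N)) n, ← Real.rpow_mul ht.le]
  have hkey : (2 / Real.pi) ^ ((n:ℝ) * N / 2) ≤ (2 / Real.pi) ^ ((n:ℝ) / 2) := by
    refine Real.rpow_le_rpow_of_exponent_ge hπ hπ1 ?_
    have hn0 : (0:ℝ) ≤ (n:ℝ) := Nat.cast_nonneg n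
    nlinarith
  calc (n.factorial : ℝ) * (c * I ^ n)
      = (2 / Real.pi) ^ ((n:ℝ) * N / 2) *
        ((n.factorial : ℝ) * (∫ x, f x) ^ n * ((1 - H * N)⁻¹) ^ n *
          (t ^ (1 - H * N)) ^ n) := by
        rw [hc, hI]; field_simp; ring
    _ ≤ (2 / Real.pi) ^ ((n:ℝ) / 2) *
        ((n.factorial : ℝ) * (∫ x, f x) ^ n * ((1 - H * N)⁻¹) ^ n *
          (t ^ (1 - H * N)) ^ n) := by
        refine mul_le_mul_of_nonneg_right hkey ?_
        positivity
    _ = (n.factorial : ℝ) *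
        ((2 / Real.pi) ^ ((1:ℝ) / 2) * (1 - H * N)⁻¹ * (∫ x, f x)) ^ n *
          t ^ ((1 - H * N) * n) := by
        rw [htn, mul_pow, mul_pow, hbn]; ring
end

section
/- Let N ≥ 3, H ∈ (1/N, 1/2] and δ > 0. Let τ : (0,∞) → [0,∞) be measurable and bounded, and suppose there exists r₀ ∈ (0, 1/e) such that τ(l) ≤ l^{1/H} (log log(1/l))^{1+δ} for all l ∈ (0, r₀]. Then there exist constants C > 0 and r₁ ∈ (0, r₀] such that r^N ∫_r^∞ l^{-N-1} τ(l) dl ≤ C r^{1/H} (log log(1/r))^{1+δ} for all r ∈ (0, r₁]. -/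
open MeasureTheory Set

theorem stmt17 (N : ℕ) (hN : 3 ≤ N) (H δ : ℝ)
    (hH1 : 1 / (N : ℝ) < H) (hH2 : H ≤ 1 / 2) (hδ : 0 < δ)
    (τ : ℝ → ℝ) (hτm : Measurable τ) (hτ0 : ∀ l > (0:ℝ), 0 ≤ τ l)
    (M : ℝ) (hτbdd : ∀ l > (0:ℝ), τ l ≤ M)
    (r₀ : ℝ) (hr₀ : r₀ ∈ Ioo (0:ℝ) (Real.exp 1)⁻¹)
    (hτle : ∀ l ∈ Ioc (0:ℝ) r₀,
      τ l ≤ l ^ (1 / H) * Real.log (Real.log (1 / l)) ^ (1 + δ)) :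
    ∃ C > (0:ℝ), ∃ r₁ ∈ Ioc (0:ℝ) r₀, ∀ r ∈ Ioc (0:ℝ) r₁,
      r ^ N * ∫ l in Ioi r, l ^ (-(N : ℝ) - 1) * τ l ≤
        C * r ^ (1 / H) * Real.log (Real.log (1 / r)) ^ (1 + δ) := by
  have hN3 : (3:ℝ) ≤ (N:ℝ) := by exact_mod_cast hN
  have hN0 : (0:ℝ) < (N:ℝ) := by linarith
  have hH0 : (0:ℝ) < H := lt_trans (by positivity) hH1
  have haN : 1 / H < (N:ℝ) := by
    rw [div_lt_iff₀ hH0]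
    rw [div_lt_iff₀ hN0] at hH1
    linarith
  have ha0 : (0:ℝ) < 1 / H := by positivity
  have hr₀0 : (0:ℝ) < r₀ := hr₀.1
  have he1 : (1:ℝ) < Real.exp 1 := by
    have := Real.add_one_le_exp (1:ℝ); linarith
  have hr₀e : r₀ < (Real.exp 1)⁻¹ := hr₀.2
  have hr₀1 : r₀ < 1 := lt_trans hr₀e (by
    rw [inv_lt_one_iff₀]; right; exact he1)
  have hM0 : (0 : ℝ) ≤ M := (hτ0 1 one_pos).trans (hτbdd 1 one_pos)
  have hp : (-(N:ℝ) - 1) < -1 := by linarith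
  have hq : (1 / H - (N:ℝ) - 1) < -1 := by linarith
  -- integrability of the integrand on Ioi r for any r > 0
  have hgint : ∀ r : ℝ, 0 < r →
      IntegrableOn (fun l => l ^ (-(N:ℝ) - 1) * τ l) (Ioi r) := by
    intro r hr
    have hI : IntegrableOn (fun l : ℝ => l ^ (-(N:ℝ) - 1)) (Ioi r) :=
      integrableOn_Ioi_rpow_of_lt hp hr
    refine (hI.mul_const M).mono' (hI.aestronglyMeasurable.mul hτm.aestronglyMeasurable) ?_
    filter_upwards [ae_restrict_mem measurableSet_Ioi] with l hl
    have hl0 : 0 < l := hr.trans hl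
    have h1 : 0 ≤ τ l := hτ0 l hl0
    have h2 : τ l ≤ M := hτbdd l hl0
    have hlp : 0 < l ^ (-(N:ℝ) - 1) := Real.rpow_pos_of_pos hl0 _
    rw [Real.norm_eq_abs, abs_of_nonneg (by positivity)]
    exact mul_le_mul_of_nonneg_left h2 hlp.le
  -- constants
  have hC : (0:ℝ) < 1 / ((N:ℝ) - 1 / H) + M * r₀ ^ (-(N:ℝ)) / N := by
    have h1 : (0:ℝ) < 1 / ((N:ℝ) - 1 / H) := one_div_pos.mpr (by linarith)
    have h2 : (0:ℝ) < r₀ ^ (-(N:ℝ)) := Real.rpow_pos_of_pos hr₀0 _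
    have h3 : (0:ℝ) ≤ M * r₀ ^ (-(N:ℝ)) / N :=
      div_nonneg (mul_nonneg hM0 h2.le) hN0.le
    linarith
  refine ⟨1 / ((N:ℝ) - 1 / H) + M * r₀ ^ (-(N:ℝ)) / N, hC,
    min r₀ (Real.exp (-Real.exp 1)),
    ⟨lt_min hr₀0 (Real.exp_pos _), min_le_left _ _⟩, ?_⟩
  intro r hr
  obtain ⟨hr0, hrle⟩ := hr
  have hrr₀ : r ≤ r₀ := hrle.trans (min_le_left _ _)
  have hree : r ≤ Real.exp (-Real.exp 1) := hrle.trans (min_le_right _ _)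
  have hr1 : r < 1 := lt_of_le_of_lt hrr₀ hr₀1
  set L := Real.log (Real.log (1 / r)) ^ (1 + δ) with hL
  -- loglog(1/r) ≥ 1
  have hlog1 : Real.exp 1 ≤ Real.log (1 / r) := by
    rw [Real.le_log_iff_exp_le (by positivity), one_div]
    have h := inv_anti₀ hr0
      (show r ≤ (Real.exp (Real.exp 1))⁻¹ by rwa [Real.exp_neg] at hree)
    rwa [inv_inv] at h
  have hll1 : 1 ≤ Real.log (Real.log (1 / r)) := by
    have := Real.log_le_log (Real.exp_pos 1) hlog1
    rwa [Real.log_exp] at this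
  have hL1 : 1 ≤ L := by
    calc (1:ℝ) = 1 ^ (1 + δ) := (Real.one_rpow _).symm
    _ ≤ L := Real.rpow_le_rpow zero_le_one hll1 (by linarith)
  have hL0 : 0 ≤ L := zero_le_one.trans hL1
  -- split the integral
  have hint1 : IntegrableOn (fun l => l ^ (-(N:ℝ) - 1) * τ l) (Ioc r r₀) :=
    (hgint r hr0).mono_set Ioc_subset_Ioi_self
  have hint2 : IntegrableOn (fun l => l ^ (-(N:ℝ) - 1) * τ l) (Ioi r₀) := hgint r₀ hr₀0
  have hsplit : (∫ l in Ioi r, l ^ (-(N:ℝ) - 1) * τ l)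
      = (∫ l in Ioc r r₀, l ^ (-(N:ℝ) - 1) * τ l)
        + ∫ l in Ioi r₀, l ^ (-(N:ℝ) - 1) * τ l := by
    rw [← Ioc_union_Ioi_eq_Ioi hrr₀,
      setIntegral_union (Ioc_disjoint_Ioi le_rfl) measurableSet_Ioi hint1 hint2]
  -- bound on the near part
  have hqint : IntegrableOn (fun l : ℝ => l ^ (1 / H - (N:ℝ) - 1) * L) (Ioi r) :=
    (integrableOn_Ioi_rpow_of_lt hq hr0).mul_const L
  have hE1 : (∫ l in Ioc r r₀, l ^ (-(N:ℝ) - 1) * τ l)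
      ≤ L * (r ^ (1 / H - (N:ℝ)) / ((N:ℝ) - 1 / H)) := by
    have hmono : (∫ l in Ioc r r₀, l ^ (-(N:ℝ) - 1) * τ l)
        ≤ ∫ l in Ioc r r₀, l ^ (1 / H - (N:ℝ) - 1) * L := by
      refine setIntegral_mono_on hint1 (hqint.mono_set Ioc_subset_Ioi_self)
        measurableSet_Ioc ?_
      intro l hl
      have hl0 : 0 < l := hr0.trans hl.1
      have hlr₀ : l ≤ r₀ := hl.2
      have hle : Real.exp 1 ≤ 1 / l := by
        rw [one_div]
        have h := inv_anti₀ hl0 (le_of_lt (lt_of_le_of_lt hlr₀ hr₀e))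
        rwa [inv_inv] at h
      have hlogl : 1 ≤ Real.log (1 / l) := by
        have := Real.log_le_log (Real.exp_pos 1) hle
        rwa [Real.log_exp] at this
      have hlll : 0 ≤ Real.log (Real.log (1 / l)) :=
        Real.log_nonneg hlogl
      have hlogle : Real.log (Real.log (1 / l)) ≤ Real.log (Real.log (1 / r)) := by
        refine Real.log_le_log (by linarith) (Real.log_le_log (by positivity) ?_)
        exact one_div_le_one_div_of_le hr0 hl.1.le
      have hLl : Real.log (Real.log (1 / l)) ^ (1 + δ) ≤ L :=
        Real.rpow_le_rpow hlll hlogle (by linarith)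
      calc l ^ (-(N:ℝ) - 1) * τ l
          ≤ l ^ (-(N:ℝ) - 1) * (l ^ (1 / H) * Real.log (Real.log (1 / l)) ^ (1 + δ)) :=
            mul_le_mul_of_nonneg_left (hτle l ⟨hl0, hlr₀⟩)
              (Real.rpow_pos_of_pos hl0 _).le
        _ = l ^ (1 / H - (N:ℝ) - 1) * Real.log (Real.log (1 / l)) ^ (1 + δ) := by
            rw [← mul_assoc, ← Real.rpow_add hl0]; ring_nf
        _ ≤ l ^ (1 / H - (N:ℝ) - 1) * L :=
            mul_le_mul_of_nonneg_left hLl (Real.rpow_pos_of_pos hl0 _).le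
    have hsub : (∫ l in Ioc r r₀, l ^ (1 / H - (N:ℝ) - 1) * L)
        ≤ ∫ l in Ioi r, l ^ (1 / H - (N:ℝ) - 1) * L := by
      refine setIntegral_mono_set hqint ?_ (HasSubset.Subset.eventuallyLE Ioc_subset_Ioi_self)
      filter_upwards [ae_restrict_mem measurableSet_Ioi] with l hl
      exact mul_nonneg (Real.rpow_pos_of_pos (hr0.trans hl) _).le hL0
    have hval : (∫ l in Ioi r, l ^ (1 / H - (N:ℝ) - 1) * L)
        = L * (r ^ (1 / H - (N:ℝ)) / ((N:ℝ) - 1 / H)) := by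
      rw [integral_mul_const, integral_Ioi_rpow_of_lt hq hr0]
      have h1 : 1 / H - (N:ℝ) - 1 + 1 = 1 / H - (N:ℝ) := by ring
      rw [h1, show (1 / H - (N:ℝ)) = -((N:ℝ) - 1 / H) by ring, neg_div_neg_eq]
      ring
    linarith [hmono, hsub.trans_eq hval]
  -- bound on the far part
  have hE2 : (∫ l in Ioi r₀, l ^ (-(N:ℝ) - 1) * τ l)
      ≤ M * (r₀ ^ (-(N:ℝ)) / (N:ℝ)) := by
    have hpint : IntegrableOn (fun l : ℝ => l ^ (-(N:ℝ) - 1) * M) (Ioi r₀) :=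
      (integrableOn_Ioi_rpow_of_lt hp hr₀0).mul_const M
    have hmono : (∫ l in Ioi r₀, l ^ (-(N:ℝ) - 1) * τ l)
        ≤ ∫ l in Ioi r₀, l ^ (-(N:ℝ) - 1) * M := by
      refine setIntegral_mono_on hint2 hpint measurableSet_Ioi ?_
      intro l hl
      have hl0 : 0 < l := hr₀0.trans hl
      exact mul_le_mul_of_nonneg_left (hτbdd l hl0) (Real.rpow_pos_of_pos hl0 _).le
    have hval : (∫ l in Ioi r₀, l ^ (-(N:ℝ) - 1) * M)
        = M * (r₀ ^ (-(N:ℝ)) / (N:ℝ)) := by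
      rw [integral_mul_const, integral_Ioi_rpow_of_lt hp hr₀0]
      have : -(N:ℝ) - 1 + 1 = -(N:ℝ) := by ring
      rw [this]
      field_simp
    exact hmono.trans_eq hval
  -- assemble
  have hrN : (r:ℝ) ^ N = r ^ ((N:ℝ)) := (Real.rpow_natCast r N).symm
  have hrNpos : (0:ℝ) < r ^ ((N:ℝ)) := Real.rpow_pos_of_pos hr0 _
  have hIle : (∫ l in Ioi r, l ^ (-(N:ℝ) - 1) * τ l)
      ≤ L * (r ^ (1 / H - (N:ℝ)) / ((N:ℝ) - 1 / H)) + M * (r₀ ^ (-(N:ℝ)) / (N:ℝ)) := by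
    rw [hsplit]; exact add_le_add hE1 hE2
  rw [hrN]
  have hmul : r ^ ((N:ℝ)) * (∫ l in Ioi r, l ^ (-(N:ℝ) - 1) * τ l)
      ≤ r ^ ((N:ℝ)) * (L * (r ^ (1 / H - (N:ℝ)) / ((N:ℝ) - 1 / H))
        + M * (r₀ ^ (-(N:ℝ)) / (N:ℝ))) :=
    mul_le_mul_of_nonneg_left hIle hrNpos.le
  have hexp : r ^ ((N:ℝ)) * r ^ (1 / H - (N:ℝ)) = r ^ (1 / H) := by
    rw [← Real.rpow_add hr0]; ring_nf
  have hrNa : r ^ ((N:ℝ)) ≤ r ^ (1 / H) :=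
    Real.rpow_le_rpow_of_exponent_ge hr0 hr1.le haN.le
  have hra0 : (0:ℝ) ≤ r ^ (1 / H) := (Real.rpow_pos_of_pos hr0 _).le
  have hterm2 : r ^ ((N:ℝ)) * (M * (r₀ ^ (-(N:ℝ)) / (N:ℝ)))
      ≤ (M * r₀ ^ (-(N:ℝ)) / (N:ℝ)) * r ^ (1 / H) * L := by
    have h1 : r ^ ((N:ℝ)) * (M * (r₀ ^ (-(N:ℝ)) / (N:ℝ)))
        ≤ r ^ (1 / H) * (M * (r₀ ^ (-(N:ℝ)) / (N:ℝ))) := by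
      refine mul_le_mul_of_nonneg_right hrNa ?_
      have : (0:ℝ) < r₀ ^ (-(N:ℝ)) := Real.rpow_pos_of_pos hr₀0 _
      positivity
    have h2 : r ^ (1 / H) * (M * (r₀ ^ (-(N:ℝ)) / (N:ℝ)))
        ≤ (M * r₀ ^ (-(N:ℝ)) / (N:ℝ)) * r ^ (1 / H) * L := by
      have hK : (0:ℝ) ≤ M * r₀ ^ (-(N:ℝ)) / (N:ℝ) := by
        have : (0:ℝ) < r₀ ^ (-(N:ℝ)) := Real.rpow_pos_of_pos hr₀0 _
        positivity
      calc r ^ (1 / H) * (M * (r₀ ^ (-(N:ℝ)) / (N:ℝ)))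
          = (M * r₀ ^ (-(N:ℝ)) / (N:ℝ)) * r ^ (1 / H) * 1 := by ring
        _ ≤ (M * r₀ ^ (-(N:ℝ)) / (N:ℝ)) * r ^ (1 / H) * L :=
            mul_le_mul_of_nonneg_left hL1 (mul_nonneg hK hra0)
    linarith
  have hterm1 : r ^ ((N:ℝ)) * (L * (r ^ (1 / H - (N:ℝ)) / ((N:ℝ) - 1 / H)))
      = (1 / ((N:ℝ) - 1 / H)) * r ^ (1 / H) * L := by
    rw [← hexp]; ring
  calc r ^ ((N:ℝ)) * (∫ l in Ioi r, l ^ (-(N:ℝ) - 1) * τ l)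
      ≤ r ^ ((N:ℝ)) * (L * (r ^ (1 / H - (N:ℝ)) / ((N:ℝ) - 1 / H))
        + M * (r₀ ^ (-(N:ℝ)) / (N:ℝ))) := hmul
    _ = r ^ ((N:ℝ)) * (L * (r ^ (1 / H - (N:ℝ)) / ((N:ℝ) - 1 / H)))
        + r ^ ((N:ℝ)) * (M * (r₀ ^ (-(N:ℝ)) / (N:ℝ))) := by ring
    _ ≤ (1 / ((N:ℝ) - 1 / H)) * r ^ (1 / H) * L
        + (M * r₀ ^ (-(N:ℝ)) / (N:ℝ)) * r ^ (1 / H) * L := by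
        rw [hterm1]; exact add_le_add le_rfl hterm2
    _ = (1 / ((N:ℝ) - 1 / H) + M * r₀ ^ (-(N:ℝ)) / (N:ℝ)) * r ^ (1 / H) * L := by ring
end

section
/- Let N ≥ 1, T > 0 and s₀ ∈ (0,T], and let ξ : [0,T] → ℝ^N be continuous. Then σ(r) = O(r²) as r → 0 (i.e., there exist A > 0 and R > 0 with σ(r) ≤ A r² for all r ∈ (0,R)) if and only if liminf_{s ↓ 0} s^{-1/2} sup_{T-s < t < T} |ξ(T) - ξ(t)| ∈ (0, ∞], i.e., this liminf is strictly positive (possibly infinite). -/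
open MeasureTheory Set Filter

private lemma bdd_aux {N : ℕ} {T s : ℝ} (hT : 0 ≤ T) (hs : s ≤ T)
    {ξ : ℝ → EuclideanSpace ℝ (Fin N)} (hξ : ContinuousOn ξ (Icc 0 T)) :
    BddAbove ((fun t => ‖ξ T - ξ t‖) '' Ioo (T - s) T) := by
  have hsub : Ioo (T - s) T ⊆ Icc 0 T := fun t ht => ⟨by linarith [ht.1], ht.2.le⟩
  have hc : ContinuousOn (fun t => ‖ξ T - ξ t‖) (Icc 0 T) :=
    (continuousOn_const.sub hξ).norm
  have hcomp := (isCompact_Icc (a := (0:ℝ)) (b := T)).image_of_continuousOn hc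
  exact hcomp.bddAbove.mono (image_mono hsub)

private lemma rpow_half_aux {s : ℝ} (hs : 0 < s) :
    s ^ (-(1:ℝ) / 2) = (Real.sqrt s)⁻¹ := by
  rw [neg_div, Real.rpow_neg hs.le, ← Real.sqrt_eq_rpow]

theorem stmt19 (N : ℕ) (hN : 1 ≤ N) (T : ℝ) (hT : 0 < T)
    (s₀ : ℝ) (hs₀ : s₀ ∈ Ioc 0 T)
    (ξ : ℝ → EuclideanSpace ℝ (Fin N)) (hξ : ContinuousOn ξ (Icc 0 T))
    -- the first exit time σ (equal to s₀ when the set is empty)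
    (σ : ℝ → ℝ)
    (hσ : ∀ r : ℝ, σ r = sInf (insert s₀ {s ∈ Icc 0 s₀ | r < ‖ξ (T - s) - ξ T‖})) :
    -- σ(r) = O(r²) as r → 0 iff the liminf is strictly positive (possibly ∞)
    (∃ A > (0:ℝ), ∃ R > (0:ℝ), ∀ r ∈ Ioo (0:ℝ) R, σ r ≤ A * r ^ 2) ↔
      0 < liminf (fun s : ℝ => ENNReal.ofReal
          (s ^ (-(1:ℝ) / 2) * sSup ((fun t => ‖ξ T - ξ t‖) '' Ioo (T - s) T)))
        (nhdsWithin 0 (Ioi 0)) := by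
  obtain ⟨hs₀0, hs₀T⟩ := hs₀
  set S : ℝ → Set ℝ := fun r => {s ∈ Icc 0 s₀ | r < ‖ξ (T - s) - ξ T‖} with hS
  have hσ' : ∀ r, σ r = sInf (insert s₀ (S r)) := hσ
  have hbdd : ∀ r, BddBelow (insert s₀ (S r)) := by
    intro r
    refine ⟨0, ?_⟩
    rintro x (rfl | hx)
    · exact hs₀0.le
    · exact hx.1.1
  constructor
  · -- O(r²) ⇒ liminf > 0
    rintro ⟨A, hA, R, hR, hO⟩
    set c : ℝ := (Real.sqrt (2 * A))⁻¹ with hc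
    have hcpos : 0 < c := by
      rw [hc]
      exact inv_pos.mpr (Real.sqrt_pos.mpr (by linarith))
    have hle : ENNReal.ofReal c ≤ liminf (fun s : ℝ => ENNReal.ofReal
          (s ^ (-(1:ℝ) / 2) * sSup ((fun t => ‖ξ T - ξ t‖) '' Ioo (T - s) T)))
        (nhdsWithin 0 (Ioi 0)) := by
      refine Filter.le_liminf_of_le (by isBoundedDefault) ?_
      have hmem : Ioo (0:ℝ) (min (min s₀ T) (2 * A * R ^ 2)) ∈ nhdsWithin (0:ℝ) (Ioi 0) := by
        apply Ioo_mem_nhdsGT_of_mem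
        constructor
        · rfl
        · have : 0 < 2 * A * R ^ 2 := by positivity
          exact lt_min (lt_min hs₀0 hT) this
      filter_upwards [hmem] with s hs
      obtain ⟨hs0, hsgt⟩ := hs
      have hss₀ : s < s₀ := lt_of_lt_of_le hsgt (le_trans (min_le_left _ _) (min_le_left _ _))
      have hsT : s < T := lt_of_lt_of_le hsgt (le_trans (min_le_left _ _) (min_le_right _ _))
      have hsAR : s < 2 * A * R ^ 2 := lt_of_lt_of_le hsgt (min_le_right _ _)
      set r : ℝ := Real.sqrt (s / (2 * A)) with hr
      have hrpos : 0 < r := Real.sqrt_pos.mpr (by positivity)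
      have hrR : r < R := by
        rw [hr, Real.sqrt_lt' hR]
        rw [div_lt_iff₀ (by positivity)]
        linarith [hsAR]
      have hr2 : r ^ 2 = s / (2 * A) := Real.sq_sqrt (by positivity)
      have hσr : σ r ≤ s / 2 := by
        have := hO r ⟨hrpos, hrR⟩
        rw [hr2] at this
        calc σ r ≤ A * (s / (2 * A)) := this
          _ = s / 2 := by field_simp
      -- S r is nonempty
      have hne : (S r).Nonempty := by
        by_contra hemp
        rw [not_nonempty_iff_eq_empty] at hemp
        have : σ r = s₀ := by rw [hσ' r, hemp, insert_empty_eq, csInf_singleton]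
        rw [this] at hσr
        linarith
      -- an element of S r below s
      have hlt : sInf (S r) < s := by
        have h1 : sInf (insert s₀ (S r)) = min s₀ (sInf (S r)) := by
          rw [csInf_insert ((hbdd r).mono (subset_insert _ _)) hne]
        have h2 : σ r = min s₀ (sInf (S r)) := by rw [hσ' r, h1]
        rcases le_or_gt (sInf (S r)) s₀ with h | h
        · rw [min_eq_right h] at h2
          rw [← h2]; linarith
        · rw [min_eq_left h.le] at h2
          rw [h2] at hσr; linarith
      obtain ⟨s', hs'S, hs's⟩ := exists_lt_of_csInf_lt hne hlt
      obtain ⟨⟨hs'0, hs's₀⟩, hs'norm⟩ := hs'S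
      have hs'pos : 0 < s' := by
        rcases hs'0.lt_or_eq with h | h
        · exact h
        · exfalso
          rw [← h, sub_zero, sub_self, norm_zero] at hs'norm
          linarith
      -- lower bound for the sup
      have hsup : r < sSup ((fun t => ‖ξ T - ξ t‖) '' Ioo (T - s) T) := by
        refine lt_of_lt_of_le ?_ (le_csSup (bdd_aux hT.le hsT.le hξ)
          ⟨T - s', ⟨by linarith, by linarith⟩, rfl⟩)
        show r < ‖ξ T - ξ (T - s')‖
        rw [norm_sub_rev]
        exact hs'norm
      have hkey : c ≤ s ^ (-(1:ℝ) / 2) *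
          sSup ((fun t => ‖ξ T - ξ t‖) '' Ioo (T - s) T) := by
        have hsqs : 0 < Real.sqrt s := Real.sqrt_pos.mpr hs0
        have hrc : r = Real.sqrt s * c := by
          rw [hr, hc, Real.sqrt_div hs0.le, div_eq_mul_inv]
        rw [rpow_half_aux hs0]
        calc c = (Real.sqrt s)⁻¹ * r := by
              rw [hrc]; field_simp
          _ ≤ (Real.sqrt s)⁻¹ *
              sSup ((fun t => ‖ξ T - ξ t‖) '' Ioo (T - s) T) := by
              apply mul_le_mul_of_nonneg_left hsup.le (by positivity)
      exact ENNReal.ofReal_le_ofReal hkey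
    exact lt_of_lt_of_le (ENNReal.ofReal_pos.mpr hcpos) hle
  · -- liminf > 0 ⇒ O(r²)
    intro hlim
    obtain ⟨c, hc0, hcL⟩ := exists_between hlim
    have hev := Filter.eventually_lt_of_lt_liminf hcL
    obtain ⟨δ, hδ, hsub⟩ := mem_nhdsGT_iff_exists_Ioo_subset.mp hev
    rw [mem_Ioi] at hδ
    have hcne : c ≠ ⊤ := hcL.ne_top
    set c' : ℝ := c.toReal with hc'
    have hc'pos : 0 < c' := ENNReal.toReal_pos hc0.ne' hcne
    set m : ℝ := min δ (min s₀ T) with hm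
    have hmpos : 0 < m := lt_min hδ (lt_min hs₀0 hT)
    refine ⟨4 / c' ^ 2, by positivity, c' / 2 * Real.sqrt m, by positivity, ?_⟩
    rintro r ⟨hr0, hrR⟩
    set s : ℝ := 4 * r ^ 2 / c' ^ 2 with hs
    have hspos : 0 < s := by positivity
    have hsm : s < m := by
      have h1 : r < c' / 2 * Real.sqrt m := hrR
      have h2 : r ^ 2 < (c' / 2 * Real.sqrt m) ^ 2 := by
        apply pow_lt_pow_left₀ h1 hr0.le (by norm_num)
      have h3 : (c' / 2 * Real.sqrt m) ^ 2 = c' ^ 2 / 4 * m := by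
        rw [mul_pow, Real.sq_sqrt hmpos.le]; ring
      rw [hs, div_lt_iff₀ (by positivity)]
      nlinarith
    have hsδ : s < δ := lt_of_lt_of_le hsm (min_le_left _ _)
    have hss₀ : s < s₀ := lt_of_lt_of_le hsm (le_trans (min_le_right _ _) (min_le_left _ _))
    have hsT : s < T := lt_of_lt_of_le hsm (le_trans (min_le_right _ _) (min_le_right _ _))
    have hmem := hsub ⟨hspos, hsδ⟩
    have hfc : c' < s ^ (-(1:ℝ) / 2) *
        sSup ((fun t => ‖ξ T - ξ t‖) '' Ioo (T - s) T) := by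
      rw [hc']
      exact (ENNReal.lt_ofReal_iff_toReal_lt hcne).mp hmem
    have hsqs : 0 < Real.sqrt s := Real.sqrt_pos.mpr hspos
    have hMr : r < sSup ((fun t => ‖ξ T - ξ t‖) '' Ioo (T - s) T) := by
      have h1 : c' * Real.sqrt s < sSup ((fun t => ‖ξ T - ξ t‖) '' Ioo (T - s) T) := by
        rw [rpow_half_aux hspos] at hfc
        rw [← lt_div_iff₀ hsqs] at *
        calc c' < (Real.sqrt s)⁻¹ *
            sSup ((fun t => ‖ξ T - ξ t‖) '' Ioo (T - s) T) := hfc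
          _ = sSup ((fun t => ‖ξ T - ξ t‖) '' Ioo (T - s) T) / Real.sqrt s := by
              rw [div_eq_inv_mul]
      refine lt_of_lt_of_le ?_ h1.le
      have hsq : Real.sqrt s = 2 * r / c' := by
        rw [hs]
        have : 4 * r ^ 2 / c' ^ 2 = (2 * r / c') ^ 2 := by field_simp; ring
        rw [this, Real.sqrt_sq (by positivity)]
      rw [hsq]
      rw [mul_div_assoc']
      rw [lt_div_iff₀ hc'pos]
      nlinarith
    obtain ⟨x, ⟨t, htIoo, rfl⟩, hrx⟩ := exists_lt_of_lt_csSup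
      (by exact (nonempty_Ioo.mpr (by linarith)).image _) hMr
    have hs'S : T - t ∈ S r := by
      refine ⟨⟨by linarith [htIoo.2], by linarith [htIoo.1]⟩, ?_⟩
      have : T - (T - t) = t := by ring
      rw [this, norm_sub_rev]
      exact hrx
    have : σ r ≤ T - t := by
      rw [hσ' r]
      exact csInf_le (hbdd r) (mem_insert_of_mem _ hs'S)
    have hAr : 4 / c' ^ 2 * r ^ 2 = s := by rw [hs]; ring
    rw [hAr]
    linarith [htIoo.1]
end
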